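/- arXiv:1001.1186 — 9 statements merged into one kernel-verified Lean document; each statement's English description precedes it below -/
import Mathlib

section
/- A finite set of distinct points Ξ in F² is cartesian if and only if S_x(Ξ) = S_y(Ξ), where S_x(Ξ) and S_y(Ξ) are the lower sets obtained by covering Ξ with horizontal (resp. vertical) lines ordered by decreasing numbers of points. -/
open MvPolynomial Finset

/-- A finite subset of ℕ² closed under componentwise decrease. -/
def IsLowerSet2 (A : Finset (ℕ × ℕ)) : Prop :=
  ∀ a ∈ A, ∀ b : ℕ × ℕ, b.1 ≤ a.1 → b.2 ≤ a.2 → b ∈ A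

/-- `Ξ` is `A`-cartesian: `Ξ = {(x i, y j) : (i,j) ∈ A}` for a lower set `A`,
with distinct `x i`'s and distinct `y j`'s (on the relevant indices). -/
def IsCartesianWith {F : Type*} [Field F] [DecidableEq F] (A : Finset (ℕ × ℕ)) (Ξ : Finset (F × F)) : Prop :=
  IsLowerSet2 A ∧ ∃ x y : ℕ → F,
    Set.InjOn x {i | ∃ j, (i, j) ∈ A} ∧ Set.InjOn y {j | ∃ i, (i, j) ∈ A} ∧
    Ξ = A.image fun ij => (x ij.1, y ij.2)

/-- `Ξ` is cartesian. -/
def IsCartesian {F : Type*} [Field F] [DecidableEq F] (Ξ : Finset (F × F)) : Prop :=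
  ∃ A, IsCartesianWith A Ξ

/-- Multiset of numbers of points of `Ξ` on the horizontal lines meeting `Ξ`. -/
def rowCounts {F : Type*} [Field F] [DecidableEq F] (Ξ : Finset (F × F)) : Multiset ℕ :=
  (Ξ.image Prod.snd).val.map fun b => (Ξ.filter fun p => p.2 = b).card

/-- Multiset of numbers of points of `Ξ` on the vertical lines meeting `Ξ`. -/
def colCounts {F : Type*} [Field F] [DecidableEq F] (Ξ : Finset (F × F)) : Multiset ℕ :=
  (Ξ.image Prod.fst).val.map fun a => (Ξ.filter fun p => p.1 = a).card

/-- Multiset of row lengths of a finite subset of ℕ². -/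
def rowCountsA (A : Finset (ℕ × ℕ)) : Multiset ℕ :=
  (A.image Prod.snd).val.map fun j => (A.filter fun p => p.2 = j).card

/-- Multiset of column heights of a finite subset of ℕ². -/
def colCountsA (A : Finset (ℕ × ℕ)) : Multiset ℕ :=
  (A.image Prod.fst).val.map fun i => (A.filter fun p => p.1 = i).card

/-- `A` is the lower set `S_x(Ξ)` obtained by covering `Ξ` by horizontal lines
ordered by (nonincreasing) numbers of points: a lower set whose rows have
exactly the same lengths as the horizontal sections of `Ξ`. -/
def IsSx {F : Type*} [Field F] [DecidableEq F] (Ξ : Finset (F × F)) (A : Finset (ℕ × ℕ)) : Prop :=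
  IsLowerSet2 A ∧ rowCountsA A = rowCounts Ξ

/-- `A` is the lower set `S_y(Ξ)` obtained by covering `Ξ` by vertical lines. -/
def IsSy {F : Type*} [Field F] [DecidableEq F] (Ξ : Finset (F × F)) (A : Finset (ℕ × ℕ)) : Prop :=
  IsLowerSet2 A ∧ colCountsA A = colCounts Ξ

/-- Evaluation of a bivariate polynomial at a point of `F²`. -/
noncomputable def evalAt {F : Type*} [Field F] (ξ : F × F) (p : MvPolynomial (Fin 2) F) : F :=
  MvPolynomial.eval ![ξ.1, ξ.2] p

/-- The span of the monomials `x^i y^j`, `(i,j) ∈ A`. -/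
noncomputable def monSpan (F : Type*) [Field F] (A : Finset (ℕ × ℕ)) :
    Submodule F (MvPolynomial (Fin 2) F) :=
  Submodule.span F ((fun ij : ℕ × ℕ => (X 0 : MvPolynomial (Fin 2) F) ^ ij.1 * X 1 ^ ij.2) '' A)

/-- The interpolation scheme `(Ξ, A)` is regular: every data on `Ξ` is matched by a
unique element of the span of the monomials indexed by `A`. -/
def IsRegularScheme {F : Type*} [Field F] (Ξ : Finset (F × F)) (A : Finset (ℕ × ℕ)) : Prop :=
  ∀ f : F × F → F, ∃! p : MvPolynomial (Fin 2) F,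
    p ∈ monSpan F A ∧ ∀ ξ ∈ Ξ, evalAt ξ p = f ξ

/-- The ideal of polynomials vanishing on `Ξ`. -/
noncomputable def vanishingIdeal (F : Type*) [Field F] (Ξ : Finset (F × F)) :
    Ideal (MvPolynomial (Fin 2) F) :=
  ⨅ ξ ∈ Ξ, RingHom.ker (MvPolynomial.eval ![(ξ : F × F).1, ξ.2])

/-- The `≺_lex`-leading exponent (x-exponent compared first), `⊥` for the zero polynomial. -/
noncomputable def lexDeg {F : Type*} [Field F] (p : MvPolynomial (Fin 2) F) :
    WithBot (ℕ ×ₗ ℕ) :=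
  (p.support.image fun d => toLex (d 0, d 1)).max

namespace CartAux

set_option linter.unusedSectionVars false

open Finset

variable {α β γ δ : Type*} [DecidableEq α] [DecidableEq β] [DecidableEq γ] [DecidableEq δ]

/-- Length of the row of `S` at second coordinate `b`. -/
def rlen (S : Finset (α × β)) (b : β) : ℕ := (S.filter fun p => p.2 = b).card

/-- Multiset of row lengths. -/
def rowsOf (S : Finset (α × β)) : Multiset ℕ := (S.image Prod.snd).val.map (rlen S)

/-- First coordinates of the row of `S` at `b`. -/
def rset (S : Finset (α × β)) (b : β) : Finset α := (S.filter fun p => p.2 = b).image Prod.fst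

lemma mem_rset {S : Finset (α × β)} {a : α} {b : β} : a ∈ rset S b ↔ (a, b) ∈ S := by
  simp only [rset, mem_image, mem_filter]
  constructor
  · rintro ⟨⟨a', b'⟩, ⟨hp, h2⟩, h1⟩
    cases h1; cases h2; exact hp
  · intro h; exact ⟨(a, b), ⟨h, rfl⟩, rfl⟩

lemma card_rset {S : Finset (α × β)} {b : β} : (rset S b).card = rlen S b := by
  apply Finset.card_image_of_injOn
  intro p hp q hq h
  simp only [Finset.coe_filter, Set.mem_setOf_eq] at hp hq
  exact Prod.ext h (hp.2.trans hq.2.symm)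

lemma mem_swapImage {S : Finset (α × β)} {p : β × α} :
    p ∈ S.image Prod.swap ↔ p.swap ∈ S := by
  constructor
  · intro h; obtain ⟨q, hq, rfl⟩ := mem_image.mp h; simpa using hq
  · intro h; exact mem_image.mpr ⟨p.swap, h, Prod.swap_swap p⟩

lemma filter_snd_swapImage (S : Finset (α × β)) (a : α) :
    ((S.image Prod.swap).filter fun p => p.2 = a)
      = (S.filter fun p => p.1 = a).image Prod.swap := by
  ext p
  rw [mem_filter, mem_swapImage, mem_swapImage, mem_filter]
  exact Iff.rfl

lemma rlen_swapImage (S : Finset (α × β)) (a : α) :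
    rlen (S.image Prod.swap) a = (S.filter fun p => p.1 = a).card := by
  rw [rlen, filter_snd_swapImage]
  exact Finset.card_image_of_injective _ Prod.swap_injective

lemma image_snd_swapImage (S : Finset (α × β)) :
    (S.image Prod.swap).image Prod.snd = S.image Prod.fst := by
  rw [Finset.image_image]; rfl

lemma rowsOf_swapImage (S : Finset (α × β)) :
    rowsOf (S.image Prod.swap)
      = (S.image Prod.fst).val.map fun a => (S.filter fun p => p.1 = a).card := by
  rw [rowsOf, image_snd_swapImage]
  exact Multiset.map_congr rfl fun a _ => rlen_swapImage S a

lemma swapImage_swapImage (S : Finset (α × β)) :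
    (S.image Prod.swap).image Prod.swap = S := by
  rw [Finset.image_image]
  simp

/-- A downward-closed finite set of naturals is an initial segment. -/
lemma eq_range_of_dclosed (s : Finset ℕ) (h : ∀ a ∈ s, ∀ b ≤ a, b ∈ s) :
    s = Finset.range s.card := by
  have hsub : s ⊆ Finset.range s.card := by
    intro a ha
    rw [Finset.mem_range]
    by_contra hlt
    push_neg at hlt
    have h1 : Finset.range (a + 1) ⊆ s := fun b hb =>
      h a ha b (Nat.lt_succ_iff.mp (Finset.mem_range.mp hb))
    have := Finset.card_le_card h1
    rw [Finset.card_range] at this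
    omega
  exact Finset.eq_of_subset_of_card_le hsub (by rw [Finset.card_range])

lemma rlen_pos_iff {S : Finset (α × β)} {b : β} :
    0 < rlen S b ↔ b ∈ S.image Prod.snd := by
  rw [rlen, Finset.card_pos]
  constructor
  · rintro ⟨p, hp⟩
    rw [mem_filter] at hp
    exact mem_image.mpr ⟨p, hp.1, hp.2⟩
  · intro h
    obtain ⟨p, hp, rfl⟩ := mem_image.mp h
    exact ⟨p, mem_filter.mpr ⟨hp, rfl⟩⟩

lemma lower_mem_iff {L : Finset (ℕ × ℕ)} (hL : IsLowerSet2 L) {i j : ℕ} :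
    (i, j) ∈ L ↔ i < rlen L j := by
  have hset : rset L j = Finset.range (rlen L j) := by
    rw [← card_rset]
    refine eq_range_of_dclosed _ fun a ha b hb => ?_
    exact mem_rset.mpr (hL _ (mem_rset.mp ha) (b, j) hb le_rfl)
  rw [← mem_rset, hset, Finset.mem_range]

lemma rlen_anti {L : Finset (ℕ × ℕ)} (hL : IsLowerSet2 L) {j j' : ℕ} (h : j ≤ j') :
    rlen L j' ≤ rlen L j := by
  rcases Nat.eq_zero_or_pos (rlen L j') with h0 | h0
  · omega
  · have h1 : (rlen L j' - 1, j') ∈ L := (lower_mem_iff hL).mpr (by omega)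
    have h2 : (rlen L j' - 1, j) ∈ L := hL _ h1 _ le_rfl h
    have := (lower_mem_iff hL).mp h2
    omega

lemma image_snd_lower {L : Finset (ℕ × ℕ)} (hL : IsLowerSet2 L) :
    L.image Prod.snd = Finset.range (L.image Prod.snd).card := by
  refine eq_range_of_dclosed _ fun j hj j' hj' => ?_
  obtain ⟨p, hp, rfl⟩ := mem_image.mp hj
  exact mem_image.mpr ⟨(p.1, j'), hL p hp (p.1, j') le_rfl hj', rfl⟩

lemma rlen_eq_zero_of_not_mem {S : Finset (α × β)} {b : β}
    (h : b ∉ S.image Prod.snd) : rlen S b = 0 := by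
  by_contra hne
  exact h (rlen_pos_iff.mp (Nat.pos_of_ne_zero hne))

/-- Two lower sets with the same multiset of row lengths are equal. -/
lemma lower_eq_of_rowsOf_eq {L L' : Finset (ℕ × ℕ)} (hL : IsLowerSet2 L)
    (hL' : IsLowerSet2 L') (h : rowsOf L = rowsOf L') : L = L' := by
  set N := (L.image Prod.snd).card with hN
  set N' := (L'.image Prod.snd).card with hN'
  have hrows : ∀ (M : Finset (ℕ × ℕ)), IsLowerSet2 M →
      rowsOf M = ↑(((List.range (M.image Prod.snd).card)).map (rlen M)) := by
    intro M hM
    rw [rowsOf, image_snd_lower hM, Finset.range_val, Multiset.range,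
      Multiset.map_coe, Finset.card_range]
  have hsorted : ∀ (M : Finset (ℕ × ℕ)), IsLowerSet2 M → ∀ n,
      List.Pairwise (fun a b : ℕ => b ≤ a) ((List.range n).map (rlen M)) := by
    intro M hM n
    rw [List.pairwise_map]
    exact (List.pairwise_lt_range (n := n)).imp fun {a b} hab => rlen_anti hM hab.le
  have hperm : ((List.range N).map (rlen L)).Perm ((List.range N').map (rlen L')) := by
    rw [← Multiset.coe_eq_coe, ← hrows L hL, ← hrows L' hL', h]
  have hIA : IsAntisymm ℕ (fun a b : ℕ => b ≤ a) := ⟨fun a b h1 h2 => le_antisymm h2 h1⟩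
  have hlists : (List.range N).map (rlen L) = (List.range N').map (rlen L') :=
    List.Perm.eq_of_pairwise (fun a b _ _ h1 h2 => le_antisymm h2 h1) (hsorted L hL N) (hsorted L' hL' N') hperm
  have hNN : N = N' := by
    have := congrArg List.length hlists
    simpa using this
  have hrlen : ∀ j, rlen L j = rlen L' j := by
    intro j
    by_cases hj : j < N
    · have := congrArg (fun l => l[j]?) hlists
      simp only [List.getElem?_map] at this
      rw [List.getElem?_range hj, ← hNN] at this
      rw [List.getElem?_range hj] at this
      simpa using this
    · have h1 : j ∉ L.image Prod.snd := by
        rw [image_snd_lower hL, Finset.mem_range, ← hN]; omega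
      have h2 : j ∉ L'.image Prod.snd := by
        rw [image_snd_lower hL', Finset.mem_range, ← hN', ← hNN]; omega
      rw [rlen_eq_zero_of_not_mem h1, rlen_eq_zero_of_not_mem h2]
  ext ⟨i, j⟩
  rw [lower_mem_iff hL, lower_mem_iff hL', hrlen j]

lemma lower_swapImage {L : Finset (ℕ × ℕ)} (hL : IsLowerSet2 L) :
    IsLowerSet2 (L.image Prod.swap) := by
  intro a ha b h1 h2
  rw [mem_swapImage] at ha ⊢
  exact hL _ ha _ h2 h1

/-- Re-indexing a set by injective maps on each coordinate preserves row lengths. -/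
lemma rowsOf_mapGrid {A : Finset (α × β)} {x : α → γ} {y : β → δ}
    (hx : Set.InjOn x ↑(A.image Prod.fst)) (hy : Set.InjOn y ↑(A.image Prod.snd)) :
    rowsOf (A.image fun p => (x p.1, y p.2)) = rowsOf A := by
  set g : α × β → γ × δ := fun p => (x p.1, y p.2) with hg
  have hginj : Set.InjOn g ↑A := by
    intro p hp q hq hpq
    have h1 : x p.1 = x q.1 := congrArg Prod.fst hpq
    have h2 : y p.2 = y q.2 := congrArg Prod.snd hpq
    refine Prod.ext ?_ ?_
    · exact hx (Finset.mem_coe.mpr (Finset.mem_image_of_mem Prod.fst hp))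
        (Finset.mem_coe.mpr (Finset.mem_image_of_mem Prod.fst hq)) h1
    · exact hy (Finset.mem_coe.mpr (Finset.mem_image_of_mem Prod.snd hp))
        (Finset.mem_coe.mpr (Finset.mem_image_of_mem Prod.snd hq)) h2
  have himg : (A.image g).image Prod.snd = (A.image Prod.snd).image y := by
    rw [Finset.image_image, Finset.image_image]; rfl
  have hval : ((A.image Prod.snd).image y).val = (A.image Prod.snd).val.map y :=
    Finset.image_val_of_injOn hy
  have hfilter : ∀ b ∈ A.image Prod.snd,
      (A.image g).filter (fun p => p.2 = y b) = (A.filter fun p => p.2 = b).image g := by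
    intro b hb
    ext q
    simp only [mem_filter, mem_image]
    constructor
    · rintro ⟨⟨p, hp, rfl⟩, h2⟩
      have : y p.2 = y b := h2
      have hpb : p.2 = b := hy (Finset.mem_coe.mpr (Finset.mem_image_of_mem Prod.snd hp))
        (Finset.mem_coe.mpr hb) this
      exact ⟨p, ⟨hp, hpb⟩, rfl⟩
    · rintro ⟨p, ⟨hp, hp2⟩, rfl⟩
      exact ⟨⟨p, hp, rfl⟩, by show y p.2 = y b; rw [hp2]⟩
  have hrlen : ∀ b ∈ A.image Prod.snd, rlen (A.image g) (y b) = rlen A b := by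
    intro b hb
    rw [rlen, rlen, hfilter b hb]
    exact Finset.card_image_of_injOn (hginj.mono (by
      intro p hp
      exact Finset.mem_coe.mpr (Finset.mem_of_mem_filter p (Finset.mem_coe.mp hp))))
  rw [rowsOf, himg, hval, Multiset.map_map, rowsOf]
  exact Multiset.map_congr rfl fun b hb => hrlen b (Finset.mem_def.mpr hb)

lemma swapImage_mapGrid (A : Finset (α × β)) (x : α → γ) (y : β → δ) :
    (A.image fun p => (x p.1, y p.2)).image Prod.swap
      = (A.image Prod.swap).image fun p => (y p.1, x p.2) := by
  rw [Finset.image_image, Finset.image_image]; rfl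

lemma colsOf_mapGrid {A : Finset (α × β)} {x : α → γ} {y : β → δ}
    (hx : Set.InjOn x ↑(A.image Prod.fst)) (hy : Set.InjOn y ↑(A.image Prod.snd)) :
    rowsOf ((A.image fun p => (x p.1, y p.2)).image Prod.swap)
      = rowsOf (A.image Prod.swap) := by
  rw [swapImage_mapGrid]
  refine rowsOf_mapGrid (x := y) (y := x) ?_ ?_
  · rw [Finset.image_image, show Prod.fst ∘ Prod.swap = (Prod.snd : α × β → β) from rfl]
    exact hy
  · rw [image_snd_swapImage]
    exact hx

lemma card_col_full {S : Finset (α × β)} {a0 : α}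
    (hfull : ∀ b ∈ S.image Prod.snd, (a0, b) ∈ S) :
    (S.filter fun p => p.1 = a0).card = (S.image Prod.snd).card := by
  have hEq : (S.filter fun p => p.1 = a0) = (S.image Prod.snd).image fun b => (a0, b) := by
    ext p
    constructor
    · intro hp
      obtain ⟨hp1, hp2⟩ := mem_filter.mp hp
      refine mem_image.mpr ⟨p.2, mem_image_of_mem Prod.snd hp1, ?_⟩
      exact Prod.ext hp2.symm rfl
    · intro hp
      obtain ⟨b, hb, rfl⟩ := mem_image.mp hp
      exact mem_filter.mpr ⟨hfull b hb, rfl⟩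
  rw [hEq]
  exact Finset.card_image_of_injective _ fun b b' h => congrArg Prod.snd h

lemma snd_injOn_col {S : Finset (α × β)} {a0 : α} :
    Set.InjOn Prod.snd (((S.filter fun p => p.1 = a0) : Finset (α × β)) : Set (α × β)) := by
  intro p hp q hq h
  simp only [Finset.coe_filter, Set.mem_setOf_eq] at hp hq
  exact Prod.ext (hp.2.trans hq.2.symm) h

lemma full_of_card_col {S : Finset (α × β)} {a0 : α}
    (h : (S.filter fun p => p.1 = a0).card = (S.image Prod.snd).card) :
    ∀ b ∈ S.image Prod.snd, (a0, b) ∈ S := by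
  have hsub : (S.filter fun p => p.1 = a0).image Prod.snd ⊆ S.image Prod.snd :=
    Finset.image_subset_image (Finset.filter_subset _ _)
  have hcard : ((S.filter fun p => p.1 = a0).image Prod.snd).card
      = (S.image Prod.snd).card := by
    rw [Finset.card_image_of_injOn snd_injOn_col, h]
  have hEq : (S.filter fun p => p.1 = a0).image Prod.snd = S.image Prod.snd :=
    Finset.eq_of_subset_of_card_le hsub (le_of_eq hcard.symm)
  intro b hb
  rw [← hEq] at hb
  obtain ⟨p, hp, rfl⟩ := mem_image.mp hb
  rw [mem_filter] at hp
  have : (a0, p.2) = p := Prod.ext hp.2.symm rfl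
  rw [this]
  exact hp.1

/-- Removing a full column: effect on row lengths. -/
lemma remRows {S : Finset (α × β)} {a0 : α}
    (hfull : ∀ b ∈ S.image Prod.snd, (a0, b) ∈ S) :
    rowsOf (S.filter fun p => p.1 ≠ a0)
      = ((rowsOf S).map fun n => n - 1).filter fun n => n ≠ 0 := by
  set S' := S.filter fun p => p.1 ≠ a0 with hS'
  have himg : S'.image Prod.snd = (S.image Prod.snd).filter fun b => rlen S b ≠ 1 := by
    ext b
    constructor
    · intro hb
      obtain ⟨p, hp, rfl⟩ := mem_image.mp hb
      obtain ⟨hp1, hp2⟩ := mem_filter.mp hp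
      refine mem_filter.mpr ⟨mem_image_of_mem Prod.snd hp1, ?_⟩
      have h1 : p ∈ S.filter fun q => q.2 = p.2 := mem_filter.mpr ⟨hp1, rfl⟩
      have h2 : (a0, p.2) ∈ S.filter fun q => q.2 = p.2 :=
        mem_filter.mpr ⟨hfull p.2 (mem_image_of_mem Prod.snd hp1), rfl⟩
      have hne : p ≠ (a0, p.2) := fun hcon => hp2 (congrArg Prod.fst hcon)
      have : 1 < rlen S p.2 := Finset.one_lt_card.mpr ⟨p, h1, (a0, p.2), h2, hne⟩
      omega
    · intro hb
      obtain ⟨hb1, hrl⟩ := mem_filter.mp hb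
      obtain ⟨p, hp, rfl⟩ := mem_image.mp hb1
      have hmem : (a0, p.2) ∈ S.filter fun q => q.2 = p.2 :=
        mem_filter.mpr ⟨hfull p.2 (mem_image_of_mem Prod.snd hp), rfl⟩
      have h1 : 1 ≤ rlen S p.2 := Finset.card_pos.mpr ⟨(a0, p.2), hmem⟩
      have h2 : 1 < rlen S p.2 := lt_of_le_of_ne h1 (Ne.symm hrl)
      obtain ⟨q, hq, hqne⟩ := Finset.exists_mem_ne h2 (a0, p.2)
      obtain ⟨hq1, hq2⟩ := mem_filter.mp hq
      have hqa : q.1 ≠ a0 := by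
        intro hcon
        exact hqne (Prod.ext hcon hq2)
      exact mem_image.mpr ⟨q, mem_filter.mpr ⟨hq1, hqa⟩, hq2⟩
  have hrlen : ∀ b ∈ S.image Prod.snd, rlen S' b = rlen S b - 1 := by
    intro b hb
    have hrow : S'.filter (fun p => p.2 = b) = (S.filter fun p => p.2 = b).erase (a0, b) := by
      ext p
      constructor
      · intro hp
        obtain ⟨hp', hp2⟩ := mem_filter.mp hp
        obtain ⟨hp1, hpa⟩ := mem_filter.mp hp'
        exact Finset.mem_erase.mpr ⟨fun hcon => hpa (by rw [hcon]),
          mem_filter.mpr ⟨hp1, hp2⟩⟩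
      · intro hp
        obtain ⟨hne, hp'⟩ := Finset.mem_erase.mp hp
        obtain ⟨hp1, hp2⟩ := mem_filter.mp hp'
        exact mem_filter.mpr ⟨mem_filter.mpr ⟨hp1,
          fun hcon => hne (Prod.ext hcon hp2)⟩, hp2⟩
    have hmem : (a0, b) ∈ S.filter fun p => p.2 = b := mem_filter.mpr ⟨hfull b hb, rfl⟩
    rw [rlen, hrow, Finset.card_erase_of_mem hmem]
    rfl
  rw [rowsOf, himg, Finset.filter_val, rowsOf,
    Multiset.map_map, Multiset.filter_map]
  have hstep1 : Multiset.map (rlen S') (Multiset.filter (fun b => rlen S b ≠ 1) (S.image Prod.snd).val)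
      = Multiset.map (fun b => rlen S b - 1) (Multiset.filter ((fun n => n ≠ 0) ∘ (fun n => n - 1) ∘ rlen S) (S.image Prod.snd).val) := by
    have hf : Multiset.filter (fun b => rlen S b ≠ 1) (S.image Prod.snd).val
        = Multiset.filter ((fun n => n ≠ 0) ∘ (fun n => n - 1) ∘ rlen S) (S.image Prod.snd).val := by
      refine Multiset.filter_congr fun b hb => ?_
      have hpos : 0 < rlen S b := rlen_pos_iff.mpr (Finset.mem_def.mpr hb)
      show rlen S b ≠ 1 ↔ rlen S b - 1 ≠ 0
      omega
    rw [hf]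
    refine Multiset.map_congr rfl fun b hb => ?_
    have hb' : b ∈ S.image Prod.snd := Finset.mem_def.mpr (Multiset.mem_of_mem_filter hb)
    exact hrlen b hb'
  exact hstep1

/-- Removing a full column: effect on column lengths. -/
lemma remCols {S : Finset (α × β)} {a0 : α} (ha0 : a0 ∈ S.image Prod.fst)
    (hfull : ∀ b ∈ S.image Prod.snd, (a0, b) ∈ S) :
    rowsOf (S.image Prod.swap)
      = (S.image Prod.snd).card ::ₘ rowsOf ((S.filter fun p => p.1 ≠ a0).image Prod.swap) := by
  set S' := S.filter fun p => p.1 ≠ a0 with hS'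
  have himgX : S'.image Prod.fst = (S.image Prod.fst).erase a0 := by
    ext a
    simp only [hS', Finset.mem_erase, mem_filter, mem_image]
    constructor
    · rintro ⟨p, ⟨hp, hpa⟩, rfl⟩
      exact ⟨hpa, p, hp, rfl⟩
    · rintro ⟨hne, p, hp, rfl⟩
      exact ⟨p, ⟨hp, hne⟩, rfl⟩
  have hsamecol : ∀ a, a ≠ a0 →
      (S'.filter fun p => p.1 = a) = S.filter fun p => p.1 = a := by
    intro a hne
    rw [hS', Finset.filter_filter]
    refine Finset.filter_congr fun p _ => ?_
    constructor
    · rintro ⟨_, h⟩; exact h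
    · intro h; exact ⟨by rw [h]; exact hne, h⟩
  rw [rowsOf_swapImage, rowsOf_swapImage]
  have hval : (S.image Prod.fst).val = a0 ::ₘ ((S.image Prod.fst).erase a0).val := by
    rw [Finset.erase_val]
    exact (Multiset.cons_erase (Finset.mem_def.mp ha0)).symm
  rw [hval, Multiset.map_cons, card_col_full hfull, himgX]
  congr 1
  refine Multiset.map_congr rfl fun a ha => ?_
  have hane : a ≠ a0 := (Finset.mem_erase.mp (Finset.mem_def.mpr ha)).1
  rw [← hsamecol a hane]

/-- Enumerate a finset as a nodup list sorted by nonincreasing value of `f`. -/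
lemma exists_sorted_enum (s : Finset β) (f : β → ℕ) :
    ∃ l : List β, l.Nodup ∧ l.length = s.card ∧ (∀ b, b ∈ l ↔ b ∈ s) ∧
      l.Pairwise fun a b => f b ≤ f a := by
  induction s using Finset.strongInduction with
  | _ s ih =>
    rcases s.eq_empty_or_nonempty with rfl | hne
    · exact ⟨[], by simp⟩
    · obtain ⟨b, hb, hmax⟩ := Finset.exists_max_image s f hne
      obtain ⟨l, hnd, hlen, hmem, hpw⟩ := ih (s.erase b) (Finset.erase_ssubset hb)
      refine ⟨b :: l, ?_, ?_, ?_, ?_⟩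
      · exact List.nodup_cons.mpr ⟨fun h => (Finset.notMem_erase b s) ((hmem b).mp h), hnd⟩
      · have := Finset.card_erase_of_mem hb
        have hpos := Finset.card_pos.mpr hne
        simp only [List.length_cons, hlen, this]
        omega
      · intro b'
        simp only [List.mem_cons, hmem, Finset.mem_erase]
        constructor
        · rintro (rfl | ⟨_, h⟩)
          · exact hb
          · exact h
        · intro h
          by_cases hbb : b' = b
          · exact Or.inl hbb
          · exact Or.inr ⟨hbb, h⟩
      · exact List.pairwise_cons.mpr
          ⟨fun a ha => hmax a (Finset.mem_of_mem_erase ((hmem a).mp ha)), hpw⟩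

/-- `S` admits a lower set with the same row and column length multisets. -/
def Bal (S : Finset (α × β)) : Prop :=
  ∃ L : Finset (ℕ × ℕ), IsLowerSet2 L ∧ rowsOf L = rowsOf S ∧
    rowsOf (L.image Prod.swap) = rowsOf (S.image Prod.swap)

lemma rset_empty_of_not_mem {S : Finset (α × β)} {b : β}
    (h : b ∉ S.image Prod.snd) : rset S b = ∅ := by
  rw [Finset.eq_empty_iff_forall_notMem]
  intro a ha
  exact h (mem_image_of_mem Prod.snd (mem_rset.mp ha))

lemma nested_of_bal :
    ∀ (n : ℕ) (S : Finset (α × β)), S.card ≤ n → Bal S →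
      ∀ b b', rset S b ⊆ rset S b' ∨ rset S b' ⊆ rset S b := by
  intro n
  induction n with
  | zero =>
    intro S hcard _ b b'
    have hS : S = ∅ := Finset.card_eq_zero.mp (Nat.le_zero.mp hcard)
    subst hS
    left
    intro a ha
    rw [mem_rset] at ha
    exact absurd ha (Finset.notMem_empty _)
  | succ n ih =>
    rintro S hcard ⟨L, hL, hrow, hcol⟩ b b'
    rcases S.eq_empty_or_nonempty with rfl | hne
    · left
      intro a ha
      rw [mem_rset] at ha
      exact absurd ha (Finset.notMem_empty _)
    -- the numbers of rows agree
    have hYcard : (L.image Prod.snd).card = (S.image Prod.snd).card := by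
      have := congrArg Multiset.card hrow
      simpa only [rowsOf, Multiset.card_map, Finset.card_val] using this
    have hLne : L.Nonempty := by
      have h1 : (S.image Prod.snd).Nonempty := hne.image Prod.snd
      have h2 : (L.image Prod.snd).Nonempty := by
        rw [← Finset.card_pos, hYcard, Finset.card_pos]
        exact h1
      obtain ⟨j, hj⟩ := h2
      obtain ⟨p, hp, _⟩ := mem_image.mp hj
      exact ⟨p, hp⟩
    -- L has a full column at 0
    have hfull0 : ∀ j ∈ L.image Prod.snd, (0, j) ∈ L := by
      intro j hj
      obtain ⟨p, hp, rfl⟩ := mem_image.mp hj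
      exact hL p hp (0, p.2) (Nat.zero_le _) le_rfl
    have h0L : (0 : ℕ) ∈ L.image Prod.fst := by
      obtain ⟨p, hp⟩ := hLne
      exact mem_image.mpr ⟨(0, p.2), hfull0 p.2 (mem_image_of_mem Prod.snd hp), rfl⟩
    -- S has a full column at some a0
    have hmemval : (S.image Prod.snd).card ∈ rowsOf (S.image Prod.swap) := by
      rw [← hcol, rowsOf_swapImage]
      refine Multiset.mem_map.mpr ⟨0, Finset.mem_def.mp h0L, ?_⟩
      rw [card_col_full hfull0, hYcard]
    obtain ⟨a0, ha0v, ha0⟩ := by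
      rw [rowsOf_swapImage] at hmemval
      exact Multiset.mem_map.mp hmemval
    have ha0X : a0 ∈ S.image Prod.fst := Finset.mem_def.mpr ha0v
    have hfullS : ∀ b ∈ S.image Prod.snd, (a0, b) ∈ S := full_of_card_col ha0
    -- the reduced sets
    set S' := S.filter fun p => p.1 ≠ a0 with hS'def
    set L'' := L.filter fun p => p.1 ≠ 0 with hL''def
    set L' := L''.image fun p => (p.1 - 1, p.2) with hL'def
    have hcard' : S'.card ≤ n := by
      obtain ⟨p, hp⟩ := hne
      have hmem : (a0, p.2) ∈ S := hfullS p.2 (mem_image_of_mem Prod.snd hp)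
      have hss : S' ⊂ S := by
        refine Finset.ssubset_iff_of_subset (Finset.filter_subset _ _) |>.mpr ?_
        refine ⟨(a0, p.2), hmem, ?_⟩
        simp [Finset.mem_filter]
      have := Finset.card_lt_card hss
      omega
    -- L' facts
    have hmemL' : ∀ i j : ℕ, (i, j) ∈ L' ↔ (i + 1, j) ∈ L := by
      intro i j
      rw [hL'def]
      constructor
      · intro h
        obtain ⟨q, hq, hqe⟩ := mem_image.mp h
        obtain ⟨hq1, hq2⟩ := mem_filter.mp hq
        have e1 : q.1 - 1 = i := congrArg Prod.fst hqe
        have e2 : q.2 = j := congrArg Prod.snd hqe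
        have : q = (i + 1, j) := by
          refine Prod.ext ?_ e2
          show q.1 = i + 1
          omega
        rwa [← this]
      · intro h
        refine mem_image.mpr ⟨(i + 1, j), mem_filter.mpr ⟨h, by omega⟩, by simp⟩
    have hL'low : IsLowerSet2 L' := by
      rintro ⟨i, j⟩ ha ⟨i', j'⟩ h1 h2
      rw [hmemL'] at ha ⊢
      exact hL _ ha (i' + 1, j') (by simpa using h1) h2
    have hinjx : Set.InjOn (fun i : ℕ => i - 1)
        ((L''.image Prod.fst : Finset ℕ) : Set ℕ) := by
      intro i hi i' hi' h
      have hi0 : i ≠ 0 := by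
        obtain ⟨p, hp, rfl⟩ := mem_image.mp (Finset.mem_coe.mp hi)
        exact (mem_filter.mp hp).2
      have hi'0 : i' ≠ 0 := by
        obtain ⟨p, hp, rfl⟩ := mem_image.mp (Finset.mem_coe.mp hi')
        exact (mem_filter.mp hp).2
      simp only at h
      omega
    have hinjy : Set.InjOn (id : ℕ → ℕ)
        ((L''.image Prod.snd : Finset ℕ) : Set ℕ) := fun _ _ _ _ h => h
    have hL'rows : rowsOf L' = rowsOf L'' := by
      rw [hL'def]
      exact rowsOf_mapGrid (x := fun i => i - 1) (y := id) hinjx hinjy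
    have hL'cols : rowsOf (L'.image Prod.swap) = rowsOf (L''.image Prod.swap) := by
      rw [hL'def]
      exact colsOf_mapGrid (x := fun i => i - 1) (y := id) hinjx hinjy
    have hrow' : rowsOf L' = rowsOf S' := by
      rw [hL'rows, hL''def, hS'def, remRows hfull0, remRows hfullS, hrow]
    have hcol' : rowsOf (L'.image Prod.swap) = rowsOf (S'.image Prod.swap) := by
      have e1 := remCols h0L hfull0
      have e2 := remCols ha0X hfullS
      rw [e1, e2, hYcard] at hcol
      rw [hL'cols, ← hL''def] at *
      exact (Multiset.cons_inj_right _).mp hcol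
    have hnested' := ih S' hcard' ⟨L', hL'low, hrow', hcol'⟩
    -- lift nestedness from S' to S
    by_cases hbY : b ∈ S.image Prod.snd
    · by_cases hbY' : b' ∈ S.image Prod.snd
      · have hins : ∀ c ∈ S.image Prod.snd, rset S c = insert a0 (rset S' c) := by
          intro c hc
          ext a
          rw [Finset.mem_insert, mem_rset, mem_rset]
          constructor
          · intro h
            by_cases haa : a = a0
            · exact Or.inl haa
            · exact Or.inr (by rw [hS'def, mem_filter]; exact ⟨h, haa⟩)
          · rintro (rfl | h)
            · exact hfullS c hc
            · rw [hS'def, mem_filter] at h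
              exact h.1
        rw [hins b hbY, hins b' hbY']
        rcases hnested' b b' with h | h
        · exact Or.inl (Finset.insert_subset_insert _ h)
        · exact Or.inr (Finset.insert_subset_insert _ h)
      · right
        rw [rset_empty_of_not_mem hbY']
        exact Finset.empty_subset _
    · left
      rw [rset_empty_of_not_mem hbY]
      exact Finset.empty_subset _

/-- From nestedness of the rows, construct a cartesian structure. -/
lemma cartesian_of_nested {F : Type*} [Field F] [DecidableEq F] (Ξ : Finset (F × F))
    (hN : ∀ b b', rset Ξ b ⊆ rset Ξ b' ∨ rset Ξ b' ⊆ rset Ξ b) :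
    IsCartesian Ξ := by
  classical
  set Y := Ξ.image Prod.snd with hYdef
  set Xs := Ξ.image Prod.fst with hXdef
  set N := Y.card with hNdef
  set M := Xs.card with hMdef
  set clen : F → ℕ := fun a => (Ξ.filter fun p => p.1 = a).card with hclen
  obtain ⟨yl, hynd, hylen, hymem, hypw⟩ := exists_sorted_enum Y (rlen Ξ)
  obtain ⟨xl, hxnd, hxlen, hxmem, hxpw⟩ := exists_sorted_enum Xs clen
  set y : ℕ → F := fun j => yl.getD j 0 with hydef
  set x : ℕ → F := fun i => xl.getD i 0 with hxdef
  have hyget : ∀ (j : ℕ) (h : j < yl.length), y j = yl.get ⟨j, h⟩ := by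
    intro j h
    show yl.getD j 0 = _
    rw [List.getD_eq_getElem yl 0 h]
    simp [List.get_eq_getElem]
  have hxget : ∀ (i : ℕ) (h : i < xl.length), x i = xl.get ⟨i, h⟩ := by
    intro i h
    show xl.getD i 0 = _
    rw [List.getD_eq_getElem xl 0 h]
    simp [List.get_eq_getElem]
  have hymemY : ∀ j, j < N → y j ∈ Y := by
    intro j h
    have hj : j < yl.length := by rw [hylen]; exact h
    rw [hyget j hj]
    exact (hymem _).mp (List.get_mem yl ⟨j, hj⟩)
  have hxmemX : ∀ i, i < M → x i ∈ Xs := by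
    intro i h
    have hi : i < xl.length := by rw [hxlen]; exact h
    rw [hxget i hi]
    exact (hxmem _).mp (List.get_mem xl ⟨i, hi⟩)
  have hysurj : ∀ b ∈ Y, ∃ j, j < N ∧ y j = b := by
    intro b hb
    obtain ⟨j, hj, he⟩ := List.mem_iff_getElem.mp ((hymem b).mpr hb)
    refine ⟨j, by rw [hNdef, ← hylen]; exact hj, ?_⟩
    rw [hyget j hj]
    simpa using he
  have hxsurj : ∀ a ∈ Xs, ∃ i, i < M ∧ x i = a := by
    intro a ha
    obtain ⟨i, hi, he⟩ := List.mem_iff_getElem.mp ((hxmem a).mpr ha)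
    refine ⟨i, by rw [hMdef, ← hxlen]; exact hi, ?_⟩
    rw [hxget i hi]
    simpa using he
  have hyinj : ∀ j j', j < N → j' < N → y j = y j' → j = j' := by
    intro j j' hj hj' h
    have hj1 : j < yl.length := by rw [hylen]; exact hj
    have hj2 : j' < yl.length := by rw [hylen]; exact hj'
    rw [hyget j hj1, hyget j' hj2] at h
    have := List.nodup_iff_injective_get.mp hynd h
    simpa using congrArg Fin.val this
  have hxinj : ∀ i i', i < M → i' < M → x i = x i' → i = i' := by
    intro i i' hi hi' h
    have hi1 : i < xl.length := by rw [hxlen]; exact hi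
    have hi2 : i' < xl.length := by rw [hxlen]; exact hi'
    rw [hxget i hi1, hxget i' hi2] at h
    have := List.nodup_iff_injective_get.mp hxnd h
    simpa using congrArg Fin.val this
  have hyanti : ∀ j j', j ≤ j' → j' < N → rlen Ξ (y j') ≤ rlen Ξ (y j) := by
    intro j j' hle hj'
    rcases eq_or_lt_of_le hle with rfl | hlt
    · exact le_rfl
    · have hj1 : j < yl.length := by rw [hylen]; omega
      have hj2 : j' < yl.length := by rw [hylen]; exact hj'
      have := List.pairwise_iff_get.mp hypw ⟨j, hj1⟩ ⟨j', hj2⟩ (Fin.mk_lt_mk.mpr hlt)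
      rw [hyget j hj1, hyget j' hj2]
      exact this
  have hxanti : ∀ i i', i ≤ i' → i' < M → clen (x i') ≤ clen (x i) := by
    intro i i' hle hi'
    rcases eq_or_lt_of_le hle with rfl | hlt
    · exact le_rfl
    · have hi1 : i < xl.length := by rw [hxlen]; omega
      have hi2 : i' < xl.length := by rw [hxlen]; exact hi'
      have := List.pairwise_iff_get.mp hxpw ⟨i, hi1⟩ ⟨i', hi2⟩ (Fin.mk_lt_mk.mpr hlt)
      rw [hxget i hi1, hxget i' hi2]
      exact this
  have hchain : ∀ j j', j ≤ j' → j' < N → rset Ξ (y j') ⊆ rset Ξ (y j) := by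
    intro j j' hle hj'
    rcases hN (y j) (y j') with h | h
    · have hc1 : (rset Ξ (y j)).card ≤ (rset Ξ (y j')).card := Finset.card_le_card h
      have hc2 : (rset Ξ (y j')).card ≤ (rset Ξ (y j)).card := by
        rw [card_rset, card_rset]
        exact hyanti j j' hle hj'
      have := Finset.eq_of_subset_of_card_le h hc2
      rw [this]
    · exact h
  -- the key fact: membership in a row is determined by the column length
  have hkey : ∀ a ∈ Xs, (∀ j, j < N → (a ∈ rset Ξ (y j) ↔ j < clen a)) ∧ clen a ≤ N := by
    intro a ha
    set J := (Finset.range N).filter (fun j => a ∈ rset Ξ (y j)) with hJ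
    have hJd : ∀ u ∈ J, ∀ v ≤ u, v ∈ J := by
      intro u hu v hv
      obtain ⟨hu1, hu2⟩ := mem_filter.mp hu
      have huN : u < N := Finset.mem_range.mp hu1
      exact mem_filter.mpr ⟨Finset.mem_range.mpr (lt_of_le_of_lt hv huN),
        hchain v u hv huN hu2⟩
    have hJr : J = Finset.range J.card := eq_range_of_dclosed J hJd
    have himgJ : J.image y = (Ξ.filter fun p => p.1 = a).image Prod.snd := by
      ext bb
      constructor
      · intro h
        obtain ⟨j, hj, rfl⟩ := mem_image.mp h
        obtain ⟨_, hj2⟩ := mem_filter.mp hj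
        exact mem_image.mpr ⟨(a, y j), mem_filter.mpr ⟨mem_rset.mp hj2, rfl⟩, rfl⟩
      · intro h
        obtain ⟨p, hp, rfl⟩ := mem_image.mp h
        obtain ⟨hp1, hp2⟩ := mem_filter.mp hp
        obtain ⟨j, hjN, hje⟩ := hysurj p.2 (mem_image_of_mem Prod.snd hp1)
        refine mem_image.mpr ⟨j, mem_filter.mpr ⟨Finset.mem_range.mpr hjN, ?_⟩, hje⟩
        rw [hje, mem_rset]
        have hpe : (a, p.2) = p := Prod.ext hp2.symm rfl
        rw [hpe]
        exact hp1
    have hJcard : J.card = clen a := by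
      have h1 : (J.image y).card = J.card := by
        apply Finset.card_image_of_injOn
        intro j hj j' hj' h
        have hjN := Finset.mem_range.mp (mem_filter.mp (Finset.mem_coe.mp hj)).1
        have hjN' := Finset.mem_range.mp (mem_filter.mp (Finset.mem_coe.mp hj')).1
        exact hyinj j j' hjN hjN' h
      have h2 : ((Ξ.filter fun p => p.1 = a).image Prod.snd).card = clen a :=
        Finset.card_image_of_injOn snd_injOn_col
      rw [← h1, himgJ, h2]
    constructor
    · intro j hjN
      constructor
      · intro hmem
        have hjJ : j ∈ J := mem_filter.mpr ⟨Finset.mem_range.mpr hjN, hmem⟩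
        rw [hJr, Finset.mem_range, hJcard] at hjJ
        exact hjJ
      · intro hlt
        have hjJ : j ∈ J := by
          rw [hJr, Finset.mem_range, hJcard]
          exact hlt
        exact (mem_filter.mp hjJ).2
    · rw [← hJcard]
      have := Finset.card_le_card (Finset.filter_subset (fun j => a ∈ rset Ξ (y j)) (Finset.range N))
      rwa [Finset.card_range] at this
  -- the lower set
  set A0 := ((Finset.range M) ×ˢ (Finset.range N)).filter (fun ij => ij.2 < clen (x ij.1))
    with hA0def
  have hmemA0 : ∀ i j : ℕ, (i, j) ∈ A0 ↔ i < M ∧ j < N ∧ j < clen (x i) := by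
    intro i j
    rw [hA0def, mem_filter, Finset.mem_product, Finset.mem_range, Finset.mem_range]
    tauto
  refine ⟨A0, ?_, x, y, ?_, ?_, ?_⟩
  · rintro ⟨i, j⟩ ha ⟨i', j'⟩ h1 h2
    simp only at h1 h2
    obtain ⟨hiM, hjN, hjc⟩ := (hmemA0 i j).mp ha
    exact (hmemA0 i' j').mpr ⟨lt_of_le_of_lt h1 hiM, lt_of_le_of_lt h2 hjN,
      lt_of_lt_of_le (lt_of_le_of_lt h2 hjc) (hxanti i' i h1 hiM)⟩
  · intro i hi i' hi' h
    obtain ⟨j, hj⟩ := hi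
    obtain ⟨j', hj'⟩ := hi'
    exact hxinj i i' ((hmemA0 i j).mp hj).1 ((hmemA0 i' j').mp hj').1 h
  · intro j hj j' hj' h
    obtain ⟨i, hi⟩ := hj
    obtain ⟨i', hi'⟩ := hj'
    exact hyinj j j' ((hmemA0 i j).mp hi).2.1 ((hmemA0 i' j').mp hi').2.1 h
  · ext p
    constructor
    · intro hp
      have hp1 : p.1 ∈ Xs := mem_image_of_mem Prod.fst hp
      have hp2 : p.2 ∈ Y := mem_image_of_mem Prod.snd hp
      obtain ⟨i, hiM, hie⟩ := hxsurj p.1 hp1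
      obtain ⟨j, hjN, hje⟩ := hysurj p.2 hp2
      have hrs : p.1 ∈ rset Ξ (y j) := by
        rw [hje, mem_rset]
        exact hp
      have hjc : j < clen p.1 := ((hkey p.1 hp1).1 j hjN).mp hrs
      refine mem_image.mpr ⟨(i, j), (hmemA0 i j).mpr ⟨hiM, hjN, by rw [hie]; exact hjc⟩, ?_⟩
      show (x i, y j) = p
      rw [hie, hje]
    · intro hp
      obtain ⟨⟨i, j⟩, hij, rfl⟩ := mem_image.mp hp
      obtain ⟨hiM, hjN, hjc⟩ := (hmemA0 i j).mp hij
      have hrs : x i ∈ rset Ξ (y j) := ((hkey (x i) (hxmemX i hiM)).1 j hjN).mpr hjc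
      exact mem_rset.mp hrs

end CartAux


/-- A finite set of distinct points `Ξ ⊆ F²` is cartesian
if and only if `S_x(Ξ) = S_y(Ξ)`. -/
theorem cartesian_iff_Sx_eq_Sy {F : Type*} [Field F] [DecidableEq F]
    (Ξ : Finset (F × F)) (A B : Finset (ℕ × ℕ))
    (hA : IsSx Ξ A) (hB : IsSy Ξ B) :
    IsCartesian Ξ ↔ A = B := by
  classical
  obtain ⟨hAl, hAr⟩ := hA
  obtain ⟨hBl, hBr⟩ := hB
  have hArows : CartAux.rowsOf A = CartAux.rowsOf Ξ := hAr
  have hBcols : CartAux.rowsOf (B.image Prod.swap)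
      = CartAux.rowsOf (Ξ.image Prod.swap) := by
    rw [CartAux.rowsOf_swapImage, CartAux.rowsOf_swapImage]
    exact hBr
  constructor
  · rintro ⟨C, hCl, xx, yy, hxx, hyy, hXi⟩
    have hsetx : {i : ℕ | ∃ j, (i, j) ∈ C} = ((C.image Prod.fst : Finset ℕ) : Set ℕ) := by
      ext i
      simp only [Set.mem_setOf_eq, Finset.mem_coe, Finset.mem_image]
      constructor
      · rintro ⟨j, hj⟩
        exact ⟨(i, j), hj, rfl⟩
      · rintro ⟨p, hp, rfl⟩
        exact ⟨p.2, hp⟩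
    have hsety : {j : ℕ | ∃ i, (i, j) ∈ C} = ((C.image Prod.snd : Finset ℕ) : Set ℕ) := by
      ext j
      simp only [Set.mem_setOf_eq, Finset.mem_coe, Finset.mem_image]
      constructor
      · rintro ⟨i, hi⟩
        exact ⟨(i, j), hi, rfl⟩
      · rintro ⟨p, hp, rfl⟩
        exact ⟨p.1, hp⟩
    rw [hsetx] at hxx
    rw [hsety] at hyy
    have h1 : CartAux.rowsOf Ξ = CartAux.rowsOf C := by
      rw [hXi]
      exact CartAux.rowsOf_mapGrid hxx hyy
    have h2 : CartAux.rowsOf (Ξ.image Prod.swap) = CartAux.rowsOf (C.image Prod.swap) := by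
      rw [hXi]
      exact CartAux.colsOf_mapGrid hxx hyy
    have hAC : A = C := CartAux.lower_eq_of_rowsOf_eq hAl hCl (hArows.trans h1)
    have hBC : B.image Prod.swap = C.image Prod.swap :=
      CartAux.lower_eq_of_rowsOf_eq (CartAux.lower_swapImage hBl)
        (CartAux.lower_swapImage hCl) (hBcols.trans h2)
    have hBC' : B = C := by
      have := congrArg (Finset.image Prod.swap) hBC
      rwa [CartAux.swapImage_swapImage, CartAux.swapImage_swapImage] at this
    rw [hAC, hBC']
  · intro hAB
    have hbal : CartAux.Bal Ξ := ⟨A, hAl, hArows, by rw [hAB]; exact hBcols⟩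
    exact CartAux.cartesian_of_nested Ξ
      (CartAux.nested_of_bal Ξ.card Ξ le_rfl hbal)
end

section
/- A finite set of distinct points Ξ ⊂ F² is cartesian if and only if the horizontal sections are nested, H_0(Ξ) ⊇ H_1(Ξ) ⊇ ⋯ ⊇ H_ν(Ξ), and the vertical sections are nested, V_0(Ξ) ⊇ V_1(Ξ) ⊇ ⋯ ⊇ V_λ(Ξ), for suitable orderings of the lines by decreasing number of points. -/
open MvPolynomial Finset

/-- Abscissae of the points of `Ξ` on the horizontal line `y = b`. -/
def Hsec {F : Type*} [Field F] [DecidableEq F] (Ξ : Finset (F × F)) (b : F) : Finset F :=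
  (Ξ.filter fun p => p.2 = b).image Prod.fst

/-- Ordinates of the points of `Ξ` on the vertical line `x = a`. -/
def Vsec {F : Type*} [Field F] [DecidableEq F] (Ξ : Finset (F × F)) (a : F) : Finset F :=
  (Ξ.filter fun p => p.1 = a).image Prod.snd


lemma mem_Hsec {F : Type*} [Field F] [DecidableEq F] {Ξ : Finset (F × F)} {a b : F} :
    a ∈ Hsec Ξ b ↔ (a, b) ∈ Ξ := by
  simp only [Hsec, Finset.mem_image, Finset.mem_filter]
  constructor
  · rintro ⟨⟨p1, p2⟩, ⟨hp, rfl⟩, rfl⟩; exact hp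
  · intro h; exact ⟨(a, b), ⟨h, rfl⟩, rfl⟩

lemma mem_Vsec {F : Type*} [Field F] [DecidableEq F] {Ξ : Finset (F × F)} {a b : F} :
    b ∈ Vsec Ξ a ↔ (a, b) ∈ Ξ := by
  simp only [Vsec, Finset.mem_image, Finset.mem_filter]
  constructor
  · rintro ⟨⟨p1, p2⟩, ⟨hp, rfl⟩, rfl⟩; exact hp
  · intro h; exact ⟨(a, b), ⟨h, rfl⟩, rfl⟩



theorem cartesian_aux {F : Type*} [Field F] [DecidableEq F]
    (Ξ : Finset (F × F)) :
    (∃ A : Finset (ℕ × ℕ),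
      (∀ a ∈ A, ∀ b : ℕ × ℕ, b.1 ≤ a.1 → b.2 ≤ a.2 → b ∈ A) ∧ ∃ x y : ℕ → F,
        Set.InjOn x {i | ∃ j, (i, j) ∈ A} ∧ Set.InjOn y {j | ∃ i, (i, j) ∈ A} ∧
        Ξ = A.image fun ij => (x ij.1, y ij.2)) ↔
      ((∃ L : List F, L.Nodup ∧ L.toFinset = Ξ.image Prod.snd ∧
          L.Pairwise (fun b₁ b₂ => Hsec Ξ b₂ ⊆ Hsec Ξ b₁)) ∧
        (∃ L : List F, L.Nodup ∧ L.toFinset = Ξ.image Prod.fst ∧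
          L.Pairwise (fun a₁ a₂ => Vsec Ξ a₂ ⊆ Vsec Ξ a₁))) := by
  constructor
  · rintro ⟨A, hA, x, y, hx, hy, rfl⟩
    set Ξ := A.image fun ij => (x ij.1, y ij.2) with hΞ
    have memΞ : ∀ a b : F, (a, b) ∈ Ξ ↔ ∃ ij ∈ A, x ij.1 = a ∧ y ij.2 = b := by
      intro a b
      simp only [hΞ, Finset.mem_image, Prod.mk.injEq]
    constructor
    · -- horizontal
      set J := A.image Prod.snd with hJ
      have hmemJ : ∀ j, j ∈ J ↔ ∃ i, (i, j) ∈ A := by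
        intro j; simp only [hJ, Finset.mem_image]
        constructor
        · rintro ⟨⟨i, j'⟩, h, rfl⟩; exact ⟨i, h⟩
        · rintro ⟨i, h⟩; exact ⟨(i, j), h, rfl⟩
      have key : ∀ j₁ ∈ J, ∀ j₂ ∈ J, j₁ ≤ j₂ → Hsec Ξ (y j₂) ⊆ Hsec Ξ (y j₁) := by
        intro j₁ h₁ j₂ h₂ hle a ha
        rw [mem_Hsec, memΞ] at ha
        obtain ⟨⟨i, j⟩, hij, hxa, hyb⟩ := ha
        have hj : j = j₂ := hy ⟨i, hij⟩ ((hmemJ j₂).1 h₂) hyb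
        subst hj
        have : (i, j₁) ∈ A := hA (i, j) hij (i, j₁) le_rfl hle
        rw [mem_Hsec, memΞ]
        exact ⟨(i, j₁), this, hxa, rfl⟩
      refine ⟨(J.sort (· ≤ ·)).map y, ?_, ?_, ?_⟩
      · refine List.Nodup.map_on ?_ (J.sort_nodup _)
        intro j₁ h₁ j₂ h₂ hyy
        exact hy ((hmemJ j₁).1 ((Finset.mem_sort _).1 h₁))
          ((hmemJ j₂).1 ((Finset.mem_sort _).1 h₂)) hyy
      · have htf : ∀ (l : List ℕ) (f : ℕ → F), (l.map f).toFinset = l.toFinset.image f := by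
          intro l f; ext c; simp
        rw [htf, Finset.sort_toFinset]
        ext b
        simp only [Finset.mem_image, hmemJ]
        constructor
        · rintro ⟨j, ⟨i, hij⟩, rfl⟩
          exact ⟨(x i, y j), (memΞ _ _).2 ⟨(i, j), hij, rfl, rfl⟩, rfl⟩
        · rintro ⟨⟨a, b⟩, hab, rfl⟩
          obtain ⟨⟨i, j⟩, hij, _, hyb⟩ := (memΞ a b).1 hab
          exact ⟨j, ⟨i, hij⟩, hyb⟩
      · rw [List.pairwise_map]
        refine List.Pairwise.imp_of_mem ?_ (J.pairwise_sort (· ≤ ·))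
        intro j₁ j₂ h₁ h₂ hle
        exact key j₁ ((Finset.mem_sort _).1 h₁) j₂ ((Finset.mem_sort _).1 h₂) hle
    · -- vertical
      set I := A.image Prod.fst with hI
      have hmemI : ∀ i, i ∈ I ↔ ∃ j, (i, j) ∈ A := by
        intro i; simp only [hI, Finset.mem_image]
        constructor
        · rintro ⟨⟨i', j⟩, h, rfl⟩; exact ⟨j, h⟩
        · rintro ⟨j, h⟩; exact ⟨(i, j), h, rfl⟩
      have key : ∀ i₁ ∈ I, ∀ i₂ ∈ I, i₁ ≤ i₂ → Vsec Ξ (x i₂) ⊆ Vsec Ξ (x i₁) := by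
        intro i₁ h₁ i₂ h₂ hle b hb
        rw [mem_Vsec, memΞ] at hb
        obtain ⟨⟨i, j⟩, hij, hxa, hyb⟩ := hb
        have hi : i = i₂ := hx ⟨j, hij⟩ ((hmemI i₂).1 h₂) hxa
        subst hi
        have : (i₁, j) ∈ A := hA (i, j) hij (i₁, j) hle le_rfl
        rw [mem_Vsec, memΞ]
        exact ⟨(i₁, j), this, rfl, hyb⟩
      refine ⟨(I.sort (· ≤ ·)).map x, ?_, ?_, ?_⟩
      · refine List.Nodup.map_on ?_ (I.sort_nodup _)
        intro i₁ h₁ i₂ h₂ hxx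
        exact hx ((hmemI i₁).1 ((Finset.mem_sort _).1 h₁))
          ((hmemI i₂).1 ((Finset.mem_sort _).1 h₂)) hxx
      · have htf : ∀ (l : List ℕ) (f : ℕ → F), (l.map f).toFinset = l.toFinset.image f := by
          intro l f; ext c; simp
        rw [htf, Finset.sort_toFinset]
        ext a
        simp only [Finset.mem_image, hmemI]
        constructor
        · rintro ⟨i, ⟨j, hij⟩, rfl⟩
          exact ⟨(x i, y j), (memΞ _ _).2 ⟨(i, j), hij, rfl, rfl⟩, rfl⟩
        · rintro ⟨⟨a, b⟩, hab, rfl⟩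
          obtain ⟨⟨i, j⟩, hij, hxa, _⟩ := (memΞ a b).1 hab
          exact ⟨i, ⟨j, hij⟩, hxa⟩
      · rw [List.pairwise_map]
        refine List.Pairwise.imp_of_mem ?_ (I.pairwise_sort (· ≤ ·))
        intro i₁ i₂ h₁ h₂ hle
        exact key i₁ ((Finset.mem_sort _).1 h₁) i₂ ((Finset.mem_sort _).1 h₂) hle
  · rintro ⟨⟨L, hLnd, hLfin, hLpw⟩, ⟨M, hMnd, hMfin, hMpw⟩⟩
    classical
    set x : ℕ → F := fun i => M.getD i 0 with hxdef
    set y : ℕ → F := fun j => L.getD j 0 with hydef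
    set A : Finset (ℕ × ℕ) :=
      ((Finset.range M.length) ×ˢ (Finset.range L.length)).filter
        (fun ij => (x ij.1, y ij.2) ∈ Ξ) with hAdef
    have hmemA : ∀ i j, (i, j) ∈ A ↔ i < M.length ∧ j < L.length ∧ (x i, y j) ∈ Ξ := by
      intro i j
      simp only [hAdef, Finset.mem_filter, Finset.mem_product, Finset.mem_range]
      tauto
    have hxget : ∀ i (h : i < M.length), x i = M.get ⟨i, h⟩ := fun i h =>
      List.getD_eq_get M 0 ⟨i, h⟩
    have hyget : ∀ j (h : j < L.length), y j = L.get ⟨j, h⟩ := fun j h =>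
      List.getD_eq_get L 0 ⟨j, h⟩
    -- nesting facts from pairwise
    have hH : ∀ j₁ j₂, j₁ ≤ j₂ → (h₂ : j₂ < L.length) → Hsec Ξ (y j₂) ⊆ Hsec Ξ (y j₁) := by
      intro j₁ j₂ hle h₂
      rcases eq_or_lt_of_le hle with rfl | hlt
      · exact subset_rfl
      · have h₁ : j₁ < L.length := lt_trans hlt h₂
        rw [hyget j₁ h₁, hyget j₂ h₂]
        exact List.pairwise_iff_get.1 hLpw ⟨j₁, h₁⟩ ⟨j₂, h₂⟩ hlt
    have hV : ∀ i₁ i₂, i₁ ≤ i₂ → (h₂ : i₂ < M.length) → Vsec Ξ (x i₂) ⊆ Vsec Ξ (x i₁) := by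
      intro i₁ i₂ hle h₂
      rcases eq_or_lt_of_le hle with rfl | hlt
      · exact subset_rfl
      · have h₁ : i₁ < M.length := lt_trans hlt h₂
        rw [hxget i₁ h₁, hxget i₂ h₂]
        exact List.pairwise_iff_get.1 hMpw ⟨i₁, h₁⟩ ⟨i₂, h₂⟩ hlt
    refine ⟨A, ?_, x, y, ?_, ?_, ?_⟩
    · rintro ⟨i, j⟩ hij ⟨i', j'⟩ hi' hj'
      simp only at hi' hj'
      rw [hmemA] at hij
      obtain ⟨hiM, hjL, hmem⟩ := hij
      have h1 : (x i, y j') ∈ Ξ := by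
        have := hH j' j hj' hjL (mem_Hsec.2 hmem)
        exact mem_Hsec.1 this
      have h2 : (x i', y j') ∈ Ξ := by
        have := hV i' i hi' hiM (mem_Vsec.2 h1)
        exact mem_Vsec.1 this
      exact (hmemA i' j').2 ⟨lt_of_le_of_lt hi' hiM, lt_of_le_of_lt hj' hjL, h2⟩
    · rintro i₁ ⟨j₁, hij₁⟩ i₂ ⟨j₂, hij₂⟩ hxx
      have h₁ := ((hmemA _ _).1 hij₁).1
      have h₂ := ((hmemA _ _).1 hij₂).1
      rw [hxget i₁ h₁, hxget i₂ h₂] at hxx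
      simpa using (hMnd.get_inj_iff).1 hxx
    · rintro j₁ ⟨i₁, hij₁⟩ j₂ ⟨i₂, hij₂⟩ hyy
      have h₁ := ((hmemA _ _).1 hij₁).2.1
      have h₂ := ((hmemA _ _).1 hij₂).2.1
      rw [hyget j₁ h₁, hyget j₂ h₂] at hyy
      simpa using (hLnd.get_inj_iff).1 hyy
    · ext ⟨a, b⟩
      simp only [Finset.mem_image, Prod.mk.injEq]
      constructor
      · intro hab
        have hbL : b ∈ L := by
          rw [← List.mem_toFinset, hLfin]
          exact Finset.mem_image.2 ⟨(a, b), hab, rfl⟩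
        have haM : a ∈ M := by
          rw [← List.mem_toFinset, hMfin]
          exact Finset.mem_image.2 ⟨(a, b), hab, rfl⟩
        obtain ⟨⟨i, hi⟩, rfl⟩ := List.mem_iff_get.1 haM
        obtain ⟨⟨j, hj⟩, rfl⟩ := List.mem_iff_get.1 hbL
        refine ⟨(i, j), (hmemA i j).2 ⟨hi, hj, ?_⟩, hxget i hi, hyget j hj⟩
        rw [hxget i hi, hyget j hj]; exact hab
      · rintro ⟨⟨i, j⟩, hij, rfl, rfl⟩
        exact ((hmemA i j).1 hij).2.2

/-- `Ξ` is cartesian iff for suitable orderings of the horizontal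
and vertical lines (necessarily by nonincreasing numbers of points) the horizontal
sections are nested and the vertical sections are nested. -/
theorem cartesian_iff_nested_sections {F : Type*} [Field F] [DecidableEq F]
    (Ξ : Finset (F × F)) :
    IsCartesian Ξ ↔
      ((∃ L : List F, L.Nodup ∧ L.toFinset = Ξ.image Prod.snd ∧
          L.Pairwise (fun b₁ b₂ => Hsec Ξ b₂ ⊆ Hsec Ξ b₁)) ∧
        (∃ L : List F, L.Nodup ∧ L.toFinset = Ξ.image Prod.fst ∧
          L.Pairwise (fun a₁ a₂ => Vsec Ξ a₂ ⊆ Vsec Ξ a₁))) := by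
  exact cartesian_aux Ξ
end

section
/- Given a cartesian set Ξ ⊂ F², there exists a unique lower set A ⊂ ℕ₀² such that Ξ is A-cartesian and the Lagrange interpolation scheme (Ξ, A) is regular, i.e. the span of the monomials {x^i y^j : (i,j) ∈ A} is an interpolation space for Ξ: for any prescribed values on Ξ there is a unique polynomial in this span matching them. -/
open MvPolynomial Finset

set_option linter.unusedSectionVars false
set_option linter.unusedVariables false

/-- row length -/
def rlen (A : Finset (ℕ × ℕ)) (j : ℕ) : ℕ := (A.filter fun p => p.2 = j).card

lemma lower_nat_eq_range (s : Finset ℕ) (h : ∀ a ∈ s, ∀ b, b ≤ a → b ∈ s) :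
    s = Finset.range s.card := by
  ext k
  simp only [Finset.mem_range]
  constructor
  · intro hk
    have hsub : Finset.range (k+1) ⊆ s := by
      intro b hb
      exact h k hk b (Nat.lt_succ_iff.mp (Finset.mem_range.mp hb))
    have := Finset.card_le_card hsub
    simpa [Nat.succ_le_iff] using this
  · intro hk
    by_contra hks
    have hsub : s ⊆ Finset.range k := by
      intro j hj
      by_contra hj'
      exact hks (h j hj k (Nat.le_of_not_lt fun hlt => hj' (Finset.mem_range.mpr hlt)))
    have := Finset.card_le_card hsub
    simp only [Finset.card_range] at this
    omega

lemma mem_iff_lt_rlen {A : Finset (ℕ × ℕ)} (hA : IsLowerSet2 A) (i j : ℕ) :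
    (i, j) ∈ A ↔ i < rlen A j := by
  set s : Finset ℕ := (A.filter fun p => p.2 = j).image Prod.fst with hs
  have hmem : ∀ i', (i', j) ∈ A ↔ i' ∈ s := by
    intro i'
    simp only [hs, Finset.mem_image, Finset.mem_filter]
    constructor
    · intro h; exact ⟨(i', j), ⟨h, rfl⟩, rfl⟩
    · rintro ⟨⟨a, b⟩, ⟨hab, rfl⟩, rfl⟩; exact hab
  have hcard : s.card = rlen A j := by
    rw [hs, Finset.card_image_of_injOn]
    · rfl
    · rintro ⟨a, b⟩ hab ⟨c, d⟩ hcd hac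
      simp only [Finset.coe_filter, Set.mem_setOf_eq] at hab hcd
      simp only at hac
      simp [Prod.ext_iff, hac, hab.2, hcd.2]
  have hlow : ∀ a ∈ s, ∀ b, b ≤ a → b ∈ s := by
    intro a ha b hb
    rw [← hmem] at ha ⊢
    exact hA _ ha (b, j) hb le_rfl
  rw [hmem, lower_nat_eq_range s hlow, hcard, Finset.mem_range]

lemma rlen_antitone {A : Finset (ℕ × ℕ)} (hA : IsLowerSet2 A) {j j' : ℕ} (h : j ≤ j') :
    rlen A j' ≤ rlen A j := by
  by_contra hlt
  push_neg at hlt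
  have h1 : (rlen A j, j') ∈ A := (mem_iff_lt_rlen hA _ _).mpr hlt
  have h2 : (rlen A j, j) ∈ A := hA _ h1 _ le_rfl h
  exact lt_irrefl _ ((mem_iff_lt_rlen hA _ _).mp h2)

lemma image_snd_eq_range {A : Finset (ℕ × ℕ)} (hA : IsLowerSet2 A) :
    A.image Prod.snd = Finset.range (A.image Prod.snd).card := by
  apply lower_nat_eq_range
  intro a ha b hb
  simp only [Finset.mem_image] at ha ⊢
  obtain ⟨⟨i, j⟩, hij, rfl⟩ := ha
  exact ⟨(i, b), hA _ hij _ le_rfl hb, rfl⟩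

lemma rlen_eq_zero_of_ge {A : Finset (ℕ × ℕ)} (hA : IsLowerSet2 A) {j : ℕ}
    (h : (A.image Prod.snd).card ≤ j) : rlen A j = 0 := by
  rw [rlen, Finset.card_eq_zero, Finset.filter_eq_empty_iff]
  rintro ⟨a, b⟩ hab rfl
  have : b ∈ A.image Prod.snd := Finset.mem_image.mpr ⟨(a, b), hab, rfl⟩
  rw [image_snd_eq_range hA, Finset.mem_range] at this
  omega

lemma rowCountsA_eq_coe {A : Finset (ℕ × ℕ)} (hA : IsLowerSet2 A) :
    rowCountsA A = ((List.range (A.image Prod.snd).card).map (rlen A) : List ℕ) := by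
  rw [rowCountsA]
  conv_lhs => rw [image_snd_eq_range hA]
  rw [Finset.range_val, Multiset.range, Multiset.map_coe]
  rfl

lemma eq_of_rowCountsA_eq {A A' : Finset (ℕ × ℕ)} (hA : IsLowerSet2 A) (hA' : IsLowerSet2 A')
    (h : rowCountsA A = rowCountsA A') : A = A' := by
  set m := (A.image Prod.snd).card
  set m' := (A'.image Prod.snd).card
  have hlist : (List.range m).map (rlen A) = (List.range m').map (rlen A') := by
    have hperm : List.Perm ((List.range m).map (rlen A)) ((List.range m').map (rlen A')) := by
      apply Multiset.coe_eq_coe.mp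
      rw [← rowCountsA_eq_coe hA, ← rowCountsA_eq_coe hA', h]
    refine List.Perm.eq_of_pairwise' (r := (· ≥ ·)) ?_ ?_ hperm
    · rw [List.pairwise_map]
      apply List.Pairwise.imp_of_mem (l := List.range m) _ (List.pairwise_lt_range (n := m))
      intro a b ha hb hab
      exact rlen_antitone hA hab.le
    · rw [List.pairwise_map]
      apply List.Pairwise.imp_of_mem (l := List.range m') _ (List.pairwise_lt_range (n := m'))
      intro a b ha hb hab
      exact rlen_antitone hA' hab.le
  have hm : m = m' := by
    have := congrArg List.length hlist
    simpa using this
  have hrlen : ∀ j, rlen A j = rlen A' j := by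
    intro j
    rcases lt_or_ge j m with hj | hj
    · have h1 : ((List.range m).map (rlen A))[j]'(by simpa using hj) =
          ((List.range m').map (rlen A'))[j]'(by simpa [← hm] using hj) := by
        congr 1
      simpa using h1
    · rw [rlen_eq_zero_of_ge hA hj, rlen_eq_zero_of_ge hA' (by omega)]
  ext ⟨i, j⟩
  rw [mem_iff_lt_rlen hA, mem_iff_lt_rlen hA', hrlen]

lemma pt_injOn {F : Type*} [Field F] {A : Finset (ℕ × ℕ)} {x y : ℕ → F}
    (hx : Set.InjOn x {i | ∃ j, (i, j) ∈ A}) (hy : Set.InjOn y {j | ∃ i, (i, j) ∈ A}) :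
    Set.InjOn (fun ij : ℕ × ℕ => (x ij.1, y ij.2)) ↑A := by
  rintro ⟨a, b⟩ hab ⟨c, d⟩ hcd hac
  simp only [Finset.mem_coe] at hab hcd
  simp only [Prod.mk.injEq] at hac
  have h1 : a = c := hx ⟨b, hab⟩ ⟨d, hcd⟩ hac.1
  have h2 : b = d := hy ⟨a, hab⟩ ⟨c, hcd⟩ hac.2
  simp [h1, h2]

lemma rowCountsA_eq_rowCounts {F : Type*} [Field F] [DecidableEq F]
    {A : Finset (ℕ × ℕ)} {Ξ : Finset (F × F)} (h : IsCartesianWith A Ξ) :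
    rowCountsA A = rowCounts Ξ := by
  obtain ⟨hA, x, y, hx, hy, hΞ⟩ := h
  have himg : Ξ.image Prod.snd = (A.image Prod.snd).image y := by
    rw [hΞ, Finset.image_image, Finset.image_image]
    rfl
  have hyinj : Set.InjOn y ↑(A.image Prod.snd) := by
    intro a ha b hb hab
    simp only [Finset.coe_image, Set.mem_image, Finset.mem_coe] at ha hb
    obtain ⟨⟨i, j⟩, hij, rfl⟩ := ha
    obtain ⟨⟨i', j'⟩, hij', rfl⟩ := hb
    exact hy ⟨i, hij⟩ ⟨i', hij'⟩ hab
  have hfil : ∀ j ∈ A.image Prod.snd,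
      (Ξ.filter fun p => p.2 = y j).card = (A.filter fun p => p.2 = j).card := by
    intro j hj
    have heq : Ξ.filter (fun p => p.2 = y j) =
        (A.filter fun p => p.2 = j).image (fun ij => (x ij.1, y ij.2)) := by
      ext ⟨u, v⟩
      simp only [Finset.mem_filter, Finset.mem_image, hΞ]
      constructor
      · rintro ⟨⟨⟨a, b⟩, hab, heq2⟩, hv⟩
        simp only [Prod.mk.injEq] at heq2
        obtain ⟨rfl, rfl⟩ := heq2
        have : b = j := by
          apply hy ⟨a, hab⟩ _ hv
          simp only [Finset.mem_image] at hj
          obtain ⟨⟨i', j'⟩, hij', rfl⟩ := hj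
          exact ⟨i', hij'⟩
        exact ⟨(a, b), ⟨hab, this⟩, rfl⟩
      · rintro ⟨⟨a, b⟩, ⟨hab, rfl⟩, heq2⟩
        simp only [Prod.mk.injEq] at heq2
        obtain ⟨rfl, rfl⟩ := heq2
        exact ⟨⟨(a, b), hab, rfl⟩, rfl⟩
    rw [heq, Finset.card_image_of_injOn ((pt_injOn hx hy).mono (by
      intro p hp; simp only [Finset.coe_filter, Set.mem_setOf_eq] at hp; exact hp.1))]
  rw [rowCounts, himg, Finset.image_val_of_injOn hyinj, Multiset.map_map, rowCountsA]
  apply Multiset.map_congr rfl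
  intro j hj
  exact (hfil j hj).symm

lemma fin2_finsupp_eq (d : Fin 2 →₀ ℕ) :
    d = Finsupp.single 0 (d 0) + Finsupp.single 1 (d 1) := by
  ext k
  fin_cases k <;> simp

lemma X_pow_mul_X_pow (F : Type*) [Field F] (i j : ℕ) :
    (X 0 : MvPolynomial (Fin 2) F) ^ i * X 1 ^ j
      = monomial (Finsupp.single 0 i + Finsupp.single 1 j) 1 := by
  rw [X_pow_eq_monomial, X_pow_eq_monomial, monomial_mul, one_mul]

lemma mem_monSpan_iff {F : Type*} [Field F] {A : Finset (ℕ × ℕ)}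
    (p : MvPolynomial (Fin 2) F) :
    p ∈ monSpan F A ↔ ∀ d ∈ p.support, (d 0, d 1) ∈ A := by
  constructor
  · intro hp
    induction hp using Submodule.span_induction with
    | mem q hq =>
      obtain ⟨⟨i, j⟩, hij, rfl⟩ := hq
      intro d hd
      simp only [X_pow_mul_X_pow] at hd
      classical
      rw [support_monomial, if_neg one_ne_zero, Finset.mem_singleton] at hd
      subst hd
      simpa using hij
    | zero => simp
    | add q r hq hr ihq ihr =>
      intro d hd
      rcases Finset.mem_union.mp (MvPolynomial.support_add hd) with h | h
      · exact ihq d h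
      · exact ihr d h
    | smul c q hq ihq =>
      intro d hd
      exact ihq d (Finsupp.support_smul hd)
  · intro h
    rw [p.as_sum]
    apply Submodule.sum_mem
    intro d hd
    have : (monomial d) (coeff d p) = (coeff d p) • ((X 0 : MvPolynomial (Fin 2) F) ^ (d 0) * X 1 ^ (d 1)) := by
      rw [X_pow_mul_X_pow, smul_monomial, smul_eq_mul, mul_one, ← fin2_finsupp_eq]
    rw [this]
    exact Submodule.smul_mem _ _ (Submodule.subset_span ⟨(d 0, d 1), h d hd, rfl⟩)

noncomputable def newton {F : Type*} [Field F] (x y : ℕ → F) (i j : ℕ) :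
    MvPolynomial (Fin 2) F :=
  (∏ k ∈ Finset.range i, (X 0 - C (x k))) * ∏ l ∈ Finset.range j, (X 1 - C (y l))

lemma newton_eval {F : Type*} [Field F] (x y : ℕ → F) (i j : ℕ) (a b : F) :
    evalAt (a, b) (newton x y i j)
      = (∏ k ∈ Finset.range i, (a - x k)) * ∏ l ∈ Finset.range j, (b - y l) := by
  simp [evalAt, newton]

lemma degreeOf_linfactor_le {F : Type*} [Field F] (n m : Fin 2) (c : F) :
    degreeOf n ((X m - C c : MvPolynomial (Fin 2) F)) ≤ if m = n then 1 else 0 := by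
  rw [sub_eq_add_neg, ← C_neg]
  refine le_trans (degreeOf_add_le _ _ _) ?_
  rcases eq_or_ne m n with h | h
  · subst h; simp [degreeOf_X, degreeOf_C]
  · simp [degreeOf_X, degreeOf_C, Ne.symm h, h]

lemma degreeOf_linprod_le {F : Type*} [Field F] (n m : Fin 2) (c : ℕ → F) (s : Finset ℕ) :
    degreeOf n (∏ k ∈ s, (X m - C (c k) : MvPolynomial (Fin 2) F))
      ≤ s.card * (if m = n then 1 else 0) := by
  induction s using Finset.induction with
  | empty =>
    simp only [Finset.prod_empty, Finset.card_empty, zero_mul, Nat.le_zero]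
    rw [← C_1]
    exact degreeOf_C _ _
  | @insert a s' h ih =>
    rw [Finset.prod_insert h, Finset.card_insert_of_notMem h, add_mul, one_mul, add_comm]
    exact le_trans (degreeOf_mul_le _ _ _)
      (add_le_add (degreeOf_linfactor_le n m (c a)) ih)

lemma newton_support_le {F : Type*} [Field F] (x y : ℕ → F) (i j : ℕ) :
    ∀ d ∈ (newton x y i j).support, d 0 ≤ i ∧ d 1 ≤ j := by
  intro d hd
  have h0 : degreeOf 0 (newton x y i j) ≤ i := by
    refine le_trans (degreeOf_mul_le _ _ _) ?_
    have h1 := degreeOf_linprod_le (F := F) 0 0 x (Finset.range i)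
    have h2 := degreeOf_linprod_le (F := F) 0 1 y (Finset.range j)
    simp at h1 h2
    omega
  have h1 : degreeOf 1 (newton x y i j) ≤ j := by
    refine le_trans (degreeOf_mul_le _ _ _) ?_
    have h1 := degreeOf_linprod_le (F := F) 1 1 y (Finset.range j)
    have h2 := degreeOf_linprod_le (F := F) 1 0 x (Finset.range i)
    simp at h1 h2
    omega
  constructor
  · exact le_trans (by rw [degreeOf_eq_sup]; exact Finset.le_sup (f := fun m => m 0) hd) h0
  · exact le_trans (by rw [degreeOf_eq_sup]; exact Finset.le_sup (f := fun m => m 1) hd) h1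

section Reg

variable {F : Type*} [Field F] [DecidableEq F]
variable {A : Finset (ℕ × ℕ)} {Ξ : Finset (F × F)} {x y : ℕ → F}

lemma newton_eval_zero_left {a i j : ℕ} (b : F) (ha : a < i) :
    evalAt (x a, b) (newton x y i j) = 0 := by
  rw [newton_eval]
  apply mul_eq_zero_of_left
  exact Finset.prod_eq_zero (Finset.mem_range.mpr ha) (sub_self _)

lemma newton_eval_zero_right {b i j : ℕ} (a : F) (hb : b < j) :
    evalAt (a, y b) (newton x y i j) = 0 := by
  rw [newton_eval]
  apply mul_eq_zero_of_right
  exact Finset.prod_eq_zero (Finset.mem_range.mpr hb) (sub_self _)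

lemma newton_eval_ne_zero (hA : IsLowerSet2 A)
    (hx : Set.InjOn x {i | ∃ j, (i, j) ∈ A}) (hy : Set.InjOn y {j | ∃ i, (i, j) ∈ A})
    {i j a b : ℕ} (hij : (i, j) ∈ A) (hab : (a, b) ∈ A) (hia : i ≤ a) (hjb : j ≤ b) :
    evalAt (x a, y b) (newton x y i j) ≠ 0 := by
  rw [newton_eval]
  apply mul_ne_zero
  · apply Finset.prod_ne_zero_iff.mpr
    intro k hk
    rw [Finset.mem_range] at hk
    apply sub_ne_zero.mpr
    intro hxy
    have hk' : (k, j) ∈ A := hA _ hij (k, j) (le_of_lt hk) le_rfl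
    have := hx ⟨b, hab⟩ ⟨j, hk'⟩ hxy
    omega
  · apply Finset.prod_ne_zero_iff.mpr
    intro l hl
    rw [Finset.mem_range] at hl
    apply sub_ne_zero.mpr
    intro hxy
    have hl' : (i, l) ∈ A := hA _ hij (i, l) le_rfl (le_of_lt hl)
    have := hy ⟨a, hab⟩ ⟨i, hl'⟩ hxy
    omega

/-- the Newton family indexed by the subtype `↥A` -/
noncomputable def nu (x y : ℕ → F) (A : Finset (ℕ × ℕ)) : ↥A → MvPolynomial (Fin 2) F :=
  fun ij => newton x y (ij : ℕ × ℕ).1 (ij : ℕ × ℕ).2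

lemma key_indep (hA : IsLowerSet2 A)
    (hx : Set.InjOn x {i | ∃ j, (i, j) ∈ A}) (hy : Set.InjOn y {j | ∃ i, (i, j) ∈ A})
    (c : ↥A → F)
    (hc : ∀ ab : ↥A, ∑ ij : ↥A,
      c ij * evalAt (x (ab : ℕ × ℕ).1, y (ab : ℕ × ℕ).2) (nu x y A ij) = 0) :
    c = 0 := by
  by_contra hc0
  have hne : (Finset.univ.filter fun ij : ↥A => c ij ≠ 0).Nonempty := by
    rw [Finset.filter_nonempty_iff]
    by_contra h
    push_neg at h
    exact hc0 (funext fun ij => h ij (Finset.mem_univ ij))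
  obtain ⟨ab, habs, hmin⟩ : ∃ m ∈ (Finset.univ.filter fun ij : ↥A => c ij ≠ 0), ∀ x ∈ (Finset.univ.filter fun ij : ↥A => c ij ≠ 0), ¬ x < m := by
    obtain ⟨m, hm⟩ := Finset.exists_minimal hne
    exact ⟨m, hm.1, fun x hx hlt => hm.not_lt hx hlt⟩
  rw [Finset.mem_filter] at habs
  have hsum := hc ab
  rw [Finset.sum_eq_single ab] at hsum
  · rcases mul_eq_zero.mp hsum with h | h
    · exact habs.2 h
    · exact newton_eval_ne_zero hA hx hy ab.2 ab.2 le_rfl le_rfl h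
  · intro ij _ hij
    by_cases hcij : c ij = 0
    · rw [hcij, zero_mul]
    · rcases le_or_gt (ij : ℕ × ℕ).1 (ab : ℕ × ℕ).1 with h1 | h1
      · rcases le_or_gt (ij : ℕ × ℕ).2 (ab : ℕ × ℕ).2 with h2 | h2
        · exfalso
          apply hmin ij (Finset.mem_filter.mpr ⟨Finset.mem_univ _, hcij⟩)
          apply lt_of_le_of_ne
          · exact Subtype.coe_le_coe.mp (Prod.le_def.mpr ⟨h1, h2⟩)
          · exact hij
        · show c ij * evalAt (x (ab : ℕ × ℕ).1, y (ab : ℕ × ℕ).2)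
              (newton x y (ij : ℕ × ℕ).1 (ij : ℕ × ℕ).2) = 0
          rw [newton_eval_zero_right _ h2, mul_zero]
      · show c ij * evalAt (x (ab : ℕ × ℕ).1, y (ab : ℕ × ℕ).2)
            (newton x y (ij : ℕ × ℕ).1 (ij : ℕ × ℕ).2) = 0
        rw [newton_eval_zero_left _ h1, mul_zero]
  · intro h
    exact absurd (Finset.mem_univ ab) h

lemma nu_mem (hA : IsLowerSet2 A) (ij : ↥A) : nu x y A ij ∈ monSpan F A := by
  rw [mem_monSpan_iff]
  intro d hd
  obtain ⟨h0, h1⟩ := newton_support_le x y _ _ d hd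
  exact hA _ ij.2 _ h0 h1

lemma evalAt_sum_smul (ξ : F × F) (c : ↥A → F) (v : ↥A → MvPolynomial (Fin 2) F) :
    evalAt ξ (∑ ij : ↥A, c ij • v ij) = ∑ ij : ↥A, c ij * evalAt ξ (v ij) := by
  rw [evalAt, map_sum]
  exact Finset.sum_congr rfl fun ij _ => smul_eval _ _ _

lemma nu_indep (hA : IsLowerSet2 A)
    (hx : Set.InjOn x {i | ∃ j, (i, j) ∈ A}) (hy : Set.InjOn y {j | ∃ i, (i, j) ∈ A}) :
    LinearIndependent F (nu x y A (F := F)) := by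
  rw [Fintype.linearIndependent_iff]
  intro c hc ij
  have : c = 0 := by
    apply key_indep hA hx hy
    intro ab
    rw [← evalAt_sum_smul, hc]
    simp [evalAt]
  rw [this]
  rfl

lemma span_nu (hA : IsLowerSet2 A)
    (hx : Set.InjOn x {i | ∃ j, (i, j) ∈ A}) (hy : Set.InjOn y {j | ∃ i, (i, j) ∈ A}) :
    Submodule.span F (Set.range (nu x y A)) = monSpan F A := by
  have hle : Submodule.span F (Set.range (nu x y A)) ≤ monSpan F A := by
    rw [Submodule.span_le]
    rintro _ ⟨ij, rfl⟩
    exact nu_mem hA ij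
  have hfin : FiniteDimensional F (monSpan F A) := by
    rw [monSpan, ← Finset.coe_image]
    infer_instance
  apply Submodule.eq_of_le_of_finrank_le hle
  have h1 : Module.finrank F (Submodule.span F (Set.range (nu x y A))) = A.card := by
    rw [finrank_span_eq_card (nu_indep hA hx hy), Fintype.card_coe]
  have h2 : Module.finrank F (monSpan F A) ≤ A.card := by
    have : monSpan F A =
        Submodule.span F ((A.image fun ij : ℕ × ℕ =>
          (X 0 : MvPolynomial (Fin 2) F) ^ ij.1 * X 1 ^ ij.2 : Finset _) : Set _) := by
      rw [monSpan, Finset.coe_image]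
    rw [this]
    exact le_trans (finrank_span_finset_le_card _) (Finset.card_image_le)
  omega

lemma vanish_eq_zero (hA : IsLowerSet2 A)
    (hx : Set.InjOn x {i | ∃ j, (i, j) ∈ A}) (hy : Set.InjOn y {j | ∃ i, (i, j) ∈ A})
    (r : MvPolynomial (Fin 2) F) (hr : r ∈ monSpan F A)
    (h0 : ∀ ij ∈ A, evalAt (x ij.1, y ij.2) r = 0) : r = 0 := by
  rw [← span_nu hA hx hy] at hr
  obtain ⟨c, rfl⟩ := (Submodule.mem_span_range_iff_exists_fun F).mp hr
  have : c = 0 := by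
    apply key_indep hA hx hy
    intro ab
    rw [← evalAt_sum_smul]
    exact h0 _ ab.2
  rw [this]
  simp

lemma regular_of_cartesian (hA : IsLowerSet2 A)
    (hx : Set.InjOn x {i | ∃ j, (i, j) ∈ A}) (hy : Set.InjOn y {j | ∃ i, (i, j) ∈ A})
    (hXi : Ξ = A.image fun ij => (x ij.1, y ij.2)) :
    IsRegularScheme Ξ A := by
  intro f
  have hfin : FiniteDimensional F (monSpan F A) := by
    rw [monSpan, ← Finset.coe_image]
    infer_instance
  -- the evaluation linear map
  set E : monSpan F A →ₗ[F] (↥A → F) :=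
    LinearMap.pi (fun ab : ↥A =>
      ((MvPolynomial.aeval ![x (ab : ℕ × ℕ).1, y (ab : ℕ × ℕ).2]).toLinearMap.comp
        (monSpan F A).subtype)) with hE
  have hEapp : ∀ (p : monSpan F A) (ab : ↥A),
      E p ab = evalAt (x (ab : ℕ × ℕ).1, y (ab : ℕ × ℕ).2) (p : MvPolynomial (Fin 2) F) := by
    intro p ab
    simp only [hE, LinearMap.pi_apply, LinearMap.comp_apply, Submodule.subtype_apply,
      AlgHom.toLinearMap_apply]
    rw [evalAt, ← coe_aeval_eq_eval]
    rfl
  have hinj : Function.Injective E := by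
    rw [← LinearMap.ker_eq_bot, LinearMap.ker_eq_bot']
    intro p hp
    have : (p : MvPolynomial (Fin 2) F) = 0 := by
      apply vanish_eq_zero hA hx hy _ p.2
      intro ij hij
      have := congrFun hp ⟨ij, hij⟩
      rw [hEapp] at this
      exact this
    exact Subtype.ext this
  have hrank : Module.finrank F (monSpan F A) = Module.finrank F (↥A → F) := by
    rw [← span_nu hA hx hy, finrank_span_eq_card (nu_indep hA hx hy)]
    rw [Module.finrank_pi]
  have hsurj : Function.Surjective E :=
    (LinearMap.injective_iff_surjective_of_finrank_eq_finrank hrank).mp hinj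
  obtain ⟨p, hp⟩ := hsurj (fun ab => f (x (ab : ℕ × ℕ).1, y (ab : ℕ × ℕ).2))
  have hmatch : ∀ ξ ∈ Ξ, evalAt ξ (p : MvPolynomial (Fin 2) F) = f ξ := by
    intro ξ hξ
    rw [hXi, Finset.mem_image] at hξ
    obtain ⟨ij, hij, rfl⟩ := hξ
    have := congrFun hp ⟨ij, hij⟩
    rw [hEapp] at this
    exact this
  refine ⟨(p : MvPolynomial (Fin 2) F), ⟨p.2, hmatch⟩, ?_⟩
  rintro q ⟨hq, hqm⟩
  have hsub : q - (p : MvPolynomial (Fin 2) F) = 0 := by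
    apply vanish_eq_zero hA hx hy _ (Submodule.sub_mem _ hq p.2)
    intro ij hij
    have hmem : (x ij.1, y ij.2) ∈ Ξ := by
      rw [hXi]
      exact Finset.mem_image.mpr ⟨ij, hij, rfl⟩
    rw [evalAt, map_sub, ← evalAt, ← evalAt, hqm _ hmem, hmatch _ hmem, sub_self]
  linear_combination (norm := module) hsub
end Reg

/-- For a cartesian set `Ξ` there is a unique lower set `A`
such that `Ξ` is `A`-cartesian and the Lagrange interpolation scheme `(Ξ, A)`
is regular. -/
theorem unique_regular_lower_set_of_cartesian {F : Type*} [Field F] [DecidableEq F]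
    (Ξ : Finset (F × F)) (hΞ : IsCartesian Ξ) :
    ∃! A : Finset (ℕ × ℕ), IsCartesianWith A Ξ ∧ IsRegularScheme Ξ A := by
  obtain ⟨A, hcart⟩ := hΞ
  refine ⟨A, ⟨hcart, ?_⟩, ?_⟩
  · obtain ⟨hA, x, y, hx, hy, hXi⟩ := hcart
    exact regular_of_cartesian hA hx hy hXi
  · rintro A' ⟨hcart', -⟩
    exact eq_of_rowCountsA_eq hcart'.1 hcart.1
      (by rw [rowCountsA_eq_rowCounts hcart', rowCountsA_eq_rowCounts hcart])
end

section
/- Let Ξ = {u_{mn}^x = (x_{mn}, y_{mn}) : (m,n) ∈ S_x(Ξ)} be a finite point set indexed by the lower set S_x(Ξ) obtained from horizontal lines, so that points with the same second index n lie on a common horizontal line (y_{mn} = y_{0n}) and points on each line have distinct abscissae. Define φ_{ij}^x := φ-coefficient · ∏_{t=0}^{j-1}(y − y_{0t}) · ∏_{s=0}^{i-1}(x − x_{sj}), normalized so that φ_{ij}^x(u_{ij}^x) = 1. Then φ_{ij}^x(u_{mn}^x) = δ_{(i,j),(m,n)} whenever (i,j) ⪰_inlex (m,n). -/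
open MvPolynomial Finset

/-- The Newton-type polynomials `φ_{ij}^x` attached to a point set
indexed by the lower set `S_x(Ξ)` satisfy `φ_{ij}^x(u_{mn}^x) = δ_{(i,j),(m,n)}`
whenever `(i,j) ⪰_inlex (m,n)`. -/
theorem newton_duality_inlex {F : Type*} [Field F]
    (S : Finset (ℕ × ℕ)) (hS : IsLowerSet2 S)
    (u : ℕ × ℕ → F × F)
    -- points with the same second index lie on a common horizontal line
    (hy : ∀ m n, (m, n) ∈ S → (u (m, n)).2 = (u (0, n)).2)
    -- the line ordinates are pairwise distinct
    (hyd : ∀ n n', (0, n) ∈ S → (0, n') ∈ S → (u (0, n)).2 = (u (0, n')).2 → n = n')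
    -- on each line the abscissae are pairwise distinct
    (hxd : ∀ m m' n, (m, n) ∈ S → (m', n) ∈ S → (u (m, n)).1 = (u (m', n)).1 → m = m')
    (φ : ℕ → ℕ → F × F → F)
    (hφ : ∀ i j ξ, φ i j ξ =
      ((∏ t ∈ Finset.range j, ((u (0, j)).2 - (u (0, t)).2)) *
          ∏ s ∈ Finset.range i, ((u (i, j)).1 - (u (s, j)).1))⁻¹ *
        ((∏ t ∈ Finset.range j, (ξ.2 - (u (0, t)).2)) *
          ∏ s ∈ Finset.range i, (ξ.1 - (u (s, j)).1)))
    (i j m n : ℕ) (hij : (i, j) ∈ S) (hmn : (m, n) ∈ S)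
    (hord : n < j ∨ (n = j ∧ m ≤ i)) :
    φ i j (u (m, n)) = if (i, j) = (m, n) then 1 else 0 := by
  have hmem : ∀ a b c d : ℕ, (a, b) ∈ S → c ≤ a → d ≤ b → (c, d) ∈ S := by
    intro a b c d h hc hd
    exact hS (a, b) h (c, d) hc hd
  rw [hφ]
  rcases hord with h | ⟨rfl, hmi⟩
  · -- n < j : factor t = n vanishes
    rw [if_neg (by simp; omega)]
    have : (∏ t ∈ Finset.range j, ((u (m, n)).2 - (u (0, t)).2)) = 0 := by
      apply Finset.prod_eq_zero (Finset.mem_range.mpr h)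
      rw [hy m n hmn]; ring
    rw [this]; ring
  · rcases lt_or_eq_of_le hmi with hlt | rfl
    · -- m < i : factor s = m vanishes
      rw [if_neg (by simp; omega)]
      have : (∏ s ∈ Finset.range i, ((u (m, n)).1 - (u (s, n)).1)) = 0 := by
        apply Finset.prod_eq_zero (Finset.mem_range.mpr hlt)
        ring
      rw [this]; ring
    · rw [if_pos rfl, hy m n hmn]
      apply inv_mul_cancel₀
      apply mul_ne_zero
      · apply Finset.prod_ne_zero_iff.mpr
        intro t ht
        rw [Finset.mem_range] at ht
        have h0j : (0, n) ∈ S := hmem m n 0 n hmn (Nat.zero_le _) le_rfl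
        have h0t : (0, t) ∈ S := hmem 0 n 0 t h0j le_rfl ht.le
        intro hz
        exact absurd (hyd n t h0j h0t (sub_eq_zero.mp hz)) ht.ne'
      · apply Finset.prod_ne_zero_iff.mpr
        intro s hs
        rw [Finset.mem_range] at hs
        have hsj : (s, n) ∈ S := hmem m n s n hmn hs.le le_rfl
        intro hz
        exact absurd (hxd m s n hmn hsj (sub_eq_zero.mp hz)) hs.ne'
end

section
/- With Ξ and the polynomials φ_{ij}^x as above, the interpolation scheme (Ξ, S_x(Ξ)) is regular: the evaluation matrix (φ_{ij}^x(u_{mn}^x)), with rows and columns ordered increasingly by ≺_inlex, is upper unitriangular, hence {φ_{ij}^x : (i,j) ∈ S_x(Ξ)} is a basis of Span_F{x^i y^j : (i,j) ∈ S_x(Ξ)} and this span is an interpolation space for Ξ. -/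
open MvPolynomial Finset

section Aux

open MvPolynomial Finset

variable {F : Type*} [Field F]

lemma linearIndependent_of_triangular {ι : Type*} [Fintype ι]
    (k : ι → ℕ ×ₗ ℕ) (hk : Function.Injective k) (v : ι → ι → F)
    (hdiag : ∀ q, v q q = 1) (h0 : ∀ q r, k r < k q → v q r = 0) :
    LinearIndependent F v := by
  classical
  rw [Fintype.linearIndependent_iff]
  intro g hg
  by_contra hng
  push_neg at hng
  obtain ⟨i, hi⟩ := hng
  have hne : (Finset.univ.filter fun i => g i ≠ 0).Nonempty :=
    ⟨i, by simp [hi]⟩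
  obtain ⟨i₀, hi₀mem, hmin⟩ := Finset.exists_min_image _ k hne
  have h2 : ∑ j, g j * v j i₀ = 0 := by
    have := congrFun hg i₀
    simpa using this
  rw [Finset.sum_eq_single i₀] at h2
  · rw [hdiag, mul_one] at h2
    exact (Finset.mem_filter.1 hi₀mem).2 h2
  · intro b _ hb
    by_cases hgb : g b = 0
    · rw [hgb, zero_mul]
    · have hble : k i₀ ≤ k b := hmin b (Finset.mem_filter.2 ⟨Finset.mem_univ _, hgb⟩)
      have : k i₀ < k b := lt_of_le_of_ne hble (fun h => hb (hk h.symm))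
      rw [h0 b i₀ this, mul_zero]
  · intro h; exact absurd (Finset.mem_univ i₀) h

lemma prod_linear_mem (w : Fin 2) (a : ℕ → F) (j : ℕ) :
    (∏ t ∈ Finset.range j, (X w - C (a t)) : MvPolynomial (Fin 2) F) ∈
      Submodule.span F ((fun t => (X w : MvPolynomial (Fin 2) F) ^ t) '' Set.Iic j) := by
  induction j with
  | zero =>
    rw [Finset.range_zero, Finset.prod_empty]
    exact Submodule.subset_span ⟨0, Set.mem_Iic.2 le_rfl, pow_zero _⟩
  | succ n ih =>
    rw [Finset.prod_range_succ]
    have hfac : (X w - C (a n) : MvPolynomial (Fin 2) F) ∈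
        Submodule.span F ((fun t => (X w : MvPolynomial (Fin 2) F) ^ t) '' Set.Iic 1) := by
      have h1 : (X w : MvPolynomial (Fin 2) F) ∈
          Submodule.span F ((fun t => (X w : MvPolynomial (Fin 2) F) ^ t) '' Set.Iic 1) :=
        Submodule.subset_span ⟨1, Set.mem_Iic.2 le_rfl, pow_one _⟩
      have h0 : (1 : MvPolynomial (Fin 2) F) ∈
          Submodule.span F ((fun t => (X w : MvPolynomial (Fin 2) F) ^ t) '' Set.Iic 1) :=
        Submodule.subset_span ⟨0, Set.mem_Iic.2 (Nat.zero_le _), pow_zero _⟩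
      have : (C (a n) : MvPolynomial (Fin 2) F) = a n • 1 := by
        rw [smul_eq_C_mul, mul_one]
      rw [sub_eq_add_neg, this]
      exact Submodule.add_mem _ h1 (Submodule.neg_mem _ (Submodule.smul_mem _ _ h0))
    have hmul := Submodule.mul_mem_mul ih hfac
    rw [Submodule.span_mul_span] at hmul
    refine Submodule.span_le.2 ?_ hmul
    rintro p hp
    rw [Set.mem_mul] at hp
    obtain ⟨p1, hp1, p2, hp2, rfl⟩ := hp
    obtain ⟨t1, ht1, rfl⟩ := hp1
    obtain ⟨t2, ht2, rfl⟩ := hp2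
    refine Submodule.subset_span ⟨t1 + t2, Set.mem_Iic.2 ?_, by simp [pow_add]⟩
    exact add_le_add (Set.mem_Iic.1 ht1) (Set.mem_Iic.1 ht2)

end Aux

/-- With `Ξ = {u_{mn}^x : (m,n) ∈ S_x(Ξ)}` and the Newton polynomials
`φ_{ij}^x`, the scheme `(Ξ, S_x(Ξ))` is regular: the `φ_{ij}^x` are linearly
independent, they span `Span_F{x^i y^j : (i,j) ∈ S_x(Ξ)}`, and this span is an
interpolation space for `Ξ`. -/
theorem newton_basis_regular {F : Type*} [Field F] [DecidableEq F]
    (S : Finset (ℕ × ℕ)) (hS : IsLowerSet2 S)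
    (u : ℕ × ℕ → F × F)
    (hy : ∀ m n, (m, n) ∈ S → (u (m, n)).2 = (u (0, n)).2)
    (hyd : ∀ n n', (0, n) ∈ S → (0, n') ∈ S → (u (0, n)).2 = (u (0, n')).2 → n = n')
    (hxd : ∀ m m' n, (m, n) ∈ S → (m', n) ∈ S → (u (m, n)).1 = (u (m', n)).1 → m = m')
    (Φ : ℕ × ℕ → MvPolynomial (Fin 2) F)
    (hΦ : ∀ ij : ℕ × ℕ, Φ ij =
      C (((∏ t ∈ Finset.range ij.2, ((u (0, ij.2)).2 - (u (0, t)).2)) *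
          ∏ s ∈ Finset.range ij.1, ((u (ij.1, ij.2)).1 - (u (s, ij.2)).1))⁻¹) *
        ((∏ t ∈ Finset.range ij.2, (X 1 - C ((u (0, t)).2))) *
          ∏ s ∈ Finset.range ij.1, (X 0 - C ((u (s, ij.2)).1)))) :
    LinearIndependent F (fun q : S => Φ q.1) ∧
      Submodule.span F (Set.range fun q : S => Φ q.1) = monSpan F S ∧
      IsRegularScheme (S.image u) S := by
  classical
  have heval : ∀ i j : ℕ, ∀ ξ : F × F, evalAt ξ (Φ (i, j)) =
      ((∏ t ∈ Finset.range j, ((u (0, j)).2 - (u (0, t)).2)) *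
        ∏ s ∈ Finset.range i, ((u (i, j)).1 - (u (s, j)).1))⁻¹ *
      ((∏ t ∈ Finset.range j, (ξ.2 - (u (0, t)).2)) *
        ∏ s ∈ Finset.range i, (ξ.1 - (u (s, j)).1)) := by
    intro i j ξ
    rw [hΦ]
    simp [evalAt]
  have hcne : ∀ i j, (i, j) ∈ S →
      ((∏ t ∈ Finset.range j, ((u (0, j)).2 - (u (0, t)).2)) *
        ∏ s ∈ Finset.range i, ((u (i, j)).1 - (u (s, j)).1)) ≠ 0 := by
    intro i j hij
    apply mul_ne_zero
    · rw [Finset.prod_ne_zero_iff]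
      intro t ht
      rw [Finset.mem_range] at ht
      refine sub_ne_zero_of_ne fun h => ?_
      have h0j : (0, j) ∈ S := hS _ hij _ (Nat.zero_le _) le_rfl
      have h0t : (0, t) ∈ S := hS _ hij _ (Nat.zero_le _) ht.le
      exact ht.ne' (hyd j t h0j h0t h)
    · rw [Finset.prod_ne_zero_iff]
      intro s hs
      rw [Finset.mem_range] at hs
      refine sub_ne_zero_of_ne fun h => ?_
      have hsj : (s, j) ∈ S := hS _ hij _ hs.le le_rfl
      exact hs.ne' (hxd i s j hij hsj h)
  have hdiag : ∀ i j, (i, j) ∈ S → evalAt (u (i, j)) (Φ (i, j)) = 1 := by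
    intro i j hij
    rw [heval, hy i j hij]
    exact inv_mul_cancel₀ (hcne i j hij)
  have hvanish : ∀ i j m n, (m, n) ∈ S → toLex (n, m) < toLex (j, i) →
      evalAt (u (m, n)) (Φ (i, j)) = 0 := by
    intro i j m n hmn hlt
    rw [heval]
    rw [Prod.Lex.lt_iff] at hlt
    rcases hlt with h | ⟨h1, h2⟩
    · have hz : (∏ t ∈ Finset.range j, ((u (m, n)).2 - (u (0, t)).2)) = 0 :=
        Finset.prod_eq_zero (Finset.mem_range.2 h) (by rw [hy m n hmn]; exact sub_self _)
      rw [hz, zero_mul, mul_zero]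
    · simp only [ofLex_toLex] at h1 h2
      subst h1
      have hz : (∏ s ∈ Finset.range i, ((u (m, n)).1 - (u (s, n)).1)) = 0 :=
        Finset.prod_eq_zero (Finset.mem_range.2 h2) (by rw [sub_self])
      rw [hz, mul_zero, mul_zero]
  let L : MvPolynomial (Fin 2) F →ₗ[F] (↥S → F) :=
    { toFun := fun p q => evalAt (u q.1) p
      map_add' := fun p q => by funext r; simp [evalAt]
      map_smul' := fun c p => by funext r; simp [evalAt, smul_eq_C_mul] }
  have hk : Function.Injective (fun q : ↥S => toLex (q.1.2, q.1.1)) := by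
    intro a b h
    rw [toLex_inj] at h
    have h1 : a.1.2 = b.1.2 := congrArg Prod.fst h
    have h2 : a.1.1 = b.1.1 := congrArg Prod.snd h
    exact Subtype.ext (Prod.ext h2 h1)
  have hLI2 : LinearIndependent F (fun q : ↥S => L (Φ q.1)) := by
    apply linearIndependent_of_triangular (fun q : ↥S => toLex (q.1.2, q.1.1)) hk
    · intro q
      exact hdiag q.1.1 q.1.2 q.2
    · intro q r hlt
      exact hvanish q.1.1 q.1.2 r.1.1 r.1.2 r.2 hlt
  have hLIΦ : LinearIndependent F (fun q : ↥S => Φ q.1) :=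
    LinearIndependent.of_comp L hLI2
  have hmem : ∀ q : ↥S, Φ q.1 ∈ monSpan F S := by
    rintro ⟨⟨i, j⟩, hij⟩
    rw [hΦ, ← smul_eq_C_mul]
    apply Submodule.smul_mem
    have hY := prod_linear_mem (F := F) (1 : Fin 2) (fun t => (u (0, t)).2) j
    have hX := prod_linear_mem (F := F) (0 : Fin 2) (fun s => (u (s, j)).1) i
    have hmul := Submodule.mul_mem_mul hY hX
    rw [Submodule.span_mul_span] at hmul
    refine Submodule.span_le.2 ?_ hmul
    rintro p hp
    rw [Set.mem_mul] at hp
    obtain ⟨p1, ⟨t, ht, rfl⟩, p2, ⟨s, hs, rfl⟩, rfl⟩ := hp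
    apply Submodule.subset_span
    exact ⟨(s, t), hS _ hij (s, t) hs ht, by rw [mul_comm]⟩
  have himg : ((fun ij : ℕ × ℕ => (X 0 : MvPolynomial (Fin 2) F) ^ ij.1 * X 1 ^ ij.2) '' ↑S)
      = ↑(S.image fun ij => (X 0 : MvPolynomial (Fin 2) F) ^ ij.1 * X 1 ^ ij.2) :=
    (Finset.coe_image).symm
  have hfd : FiniteDimensional F (monSpan F S) := by
    rw [monSpan, himg]; infer_instance
  haveI := hfd
  have hrank1 : Module.finrank F (Submodule.span F (Set.range fun q : ↥S => Φ q.1)) = S.card := by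
    rw [finrank_span_eq_card hLIΦ, Fintype.card_coe]
  have hrank2 : Module.finrank F (monSpan F S) ≤ S.card := by
    rw [monSpan, himg]
    exact le_trans (finrank_span_finset_le_card _) Finset.card_image_le
  have hspan_le : Submodule.span F (Set.range fun q : ↥S => Φ q.1) ≤ monSpan F S :=
    Submodule.span_le.2 (by rintro _ ⟨q, rfl⟩; exact hmem q)
  have hspan_eq : Submodule.span F (Set.range fun q : ↥S => Φ q.1) = monSpan F S :=
    Submodule.eq_of_le_of_finrank_le hspan_le (by rw [hrank1]; exact hrank2)
  refine ⟨hLIΦ, hspan_eq, ?_⟩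
  have hranks : Module.finrank F (monSpan F S) = S.card := by rw [← hspan_eq, hrank1]
  let L' : monSpan F S →ₗ[F] (↥S → F) := L.comp (monSpan F S).subtype
  have hpi : Module.finrank F (↥S → F) = S.card := by
    rw [Module.finrank_pi, Fintype.card_coe]
  have hsurj : Function.Surjective L' := by
    rw [← LinearMap.range_eq_top, eq_top_iff]
    have htop : Submodule.span F (Set.range fun q : ↥S => L (Φ q.1)) = ⊤ :=
      hLI2.span_eq_top_of_card_eq_finrank' (by rw [Fintype.card_coe, hpi])
    rw [← htop]
    refine Submodule.span_le.2 ?_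
    rintro _ ⟨q, rfl⟩
    exact ⟨⟨Φ q.1, hmem q⟩, rfl⟩
  have hinj : Function.Injective L' :=
    (LinearMap.injective_iff_surjective_of_finrank_eq_finrank (by rw [hranks, hpi])).2 hsurj
  intro f
  obtain ⟨w, hw⟩ := hsurj fun q => f (u q.1)
  refine ⟨w.1, ⟨w.2, ?_⟩, ?_⟩
  · intro ξ hξ
    obtain ⟨q, hq, rfl⟩ := Finset.mem_image.1 hξ
    exact congrFun hw ⟨q, hq⟩
  · rintro p ⟨hpmem, hpev⟩
    have heq : L' ⟨p, hpmem⟩ = fun q => f (u q.1) := by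
      funext q
      exact hpev (u q.1) (Finset.mem_image_of_mem u q.2)
    exact congrArg Subtype.val (hinj (heq.trans hw.symm))
end

section
/- Let Ξ ⊂ F² be a finite set of distinct points with associated lower set S_x(Ξ). Then Span_F{x^i y^j : (i,j) ∈ S_x(Ξ)} is a degree reducing interpolation space with respect to the lexicographic order: it is an interpolation space for Ξ, and the Lagrange projector L onto it satisfies δ(Lq) ⪯_lex δ(q) for every polynomial q ∈ F[x,y], where δ denotes the exponent of the ≺_lex-leading monomial. -/
open MvPolynomial Finset

section Aux


lemma key_aux {F : Type*} [Field F] [DecidableEq F] (Ξ : Finset (F × F))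
    (G : Polynomial (Polynomial F)) (hG : G ≠ 0)
    (hv : ∀ ξ ∈ Ξ, Polynomial.eval ξ.1 (G.map (Polynomial.evalRingHom ξ.2)) = 0) :
    ((Ξ.image Prod.snd).filter fun b => G.natDegree < (Ξ.filter fun p => p.2 = b).card).card
      ≤ G.leadingCoeff.natDegree := by
  induction Ξ using Finset.strongInduction generalizing G with
  | _ Ξ ih =>
  by_cases hne : ((Ξ.image Prod.snd).filter fun b =>
      G.natDegree < (Ξ.filter fun p => p.2 = b).card).Nonempty
  · obtain ⟨b0, hb0⟩ := hne
    rw [mem_filter] at hb0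
    obtain ⟨hb0im, hb0cnt⟩ := hb0
    -- the slice at y = b0 vanishes
    have hrow : G.map (Polynomial.evalRingHom b0) = 0 := by
      apply Polynomial.eq_zero_of_natDegree_lt_card_of_eval_eq_zero' _
        ((Ξ.filter fun p => p.2 = b0).image Prod.fst)
      · intro a ha
        rw [mem_image] at ha
        obtain ⟨p, hp, rfl⟩ := ha
        rw [mem_filter] at hp
        have := hv p hp.1
        rwa [hp.2] at this
      · calc (G.map (Polynomial.evalRingHom b0)).natDegree ≤ G.natDegree :=
              Polynomial.natDegree_map_le
          _ < (Ξ.filter fun p => p.2 = b0).card := hb0cnt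
          _ = ((Ξ.filter fun p => p.2 = b0).image Prod.fst).card := by
              rw [Finset.card_image_of_injOn]
              intro p hp q hq hpq
              rw [mem_coe, mem_filter] at hp hq
              exact Prod.ext hpq (hp.2.trans hq.2.symm)
    -- factor out (Y - b0)
    have hdvd : Polynomial.C (Polynomial.X - Polynomial.C b0) ∣ G := by
      rw [Polynomial.C_dvd_iff_dvd_coeff]
      intro i
      rw [Polynomial.dvd_iff_isRoot]
      have : (G.map (Polynomial.evalRingHom b0)).coeff i = 0 := by rw [hrow]; simp
      rwa [Polynomial.coeff_map] at this
    obtain ⟨H, hGH⟩ := hdvd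
    have hXb : (Polynomial.X - Polynomial.C b0 : Polynomial F) ≠ 0 := Polynomial.X_sub_C_ne_zero b0
    have hH : H ≠ 0 := by rintro rfl; rw [mul_zero] at hGH; exact hG hGH
    have hdeg : G.natDegree = H.natDegree := by
      rw [hGH, Polynomial.natDegree_mul (Polynomial.C_ne_zero.mpr hXb) hH, Polynomial.natDegree_C, zero_add]
    have hlc : G.leadingCoeff = (Polynomial.X - Polynomial.C b0) * H.leadingCoeff := by
      rw [hGH, Polynomial.leadingCoeff_mul, Polynomial.leadingCoeff_C]
    have hlcH : H.leadingCoeff ≠ 0 := Polynomial.leadingCoeff_ne_zero.mpr hH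
    have hlcdeg : G.leadingCoeff.natDegree = H.leadingCoeff.natDegree + 1 := by
      rw [hlc, Polynomial.natDegree_mul hXb hlcH, Polynomial.natDegree_X_sub_C, add_comm]
    set Ξ' := Ξ.filter (fun p => p.2 ≠ b0) with hΞ'
    have hss : Ξ' ⊂ Ξ := by
      rw [Finset.filter_ssubset]
      rw [mem_image] at hb0im
      obtain ⟨p, hp, hpb⟩ := hb0im
      exact ⟨p, hp, by simp [hpb]⟩
    have hvH : ∀ ξ ∈ Ξ', Polynomial.eval ξ.1 (H.map (Polynomial.evalRingHom ξ.2)) = 0 := by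
      intro ξ hξ
      rw [hΞ', mem_filter] at hξ
      obtain ⟨hξΞ, hξb⟩ := hξ
      have h0 := hv ξ hξΞ
      rw [hGH, Polynomial.map_mul, Polynomial.eval_mul, Polynomial.map_C,
        Polynomial.eval_C] at h0
      simp only [Polynomial.coe_evalRingHom, Polynomial.eval_sub, Polynomial.eval_X,
        Polynomial.eval_C] at h0
      rcases mul_eq_zero.mp h0 with h | h
      · exact absurd (sub_eq_zero.mp h) hξb
      · exact h
    have hIH := ih Ξ' hss H hH hvH
    -- comparing the two filtered row sets
    have hsub : ((Ξ.image Prod.snd).filter fun b => G.natDegree < (Ξ.filter fun p => p.2 = b).card)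
        ⊆ insert b0 ((Ξ'.image Prod.snd).filter fun b =>
          H.natDegree < (Ξ'.filter fun p => p.2 = b).card) := by
      intro b hb
      rw [mem_filter] at hb
      obtain ⟨hbim, hbc⟩ := hb
      rcases eq_or_ne b b0 with rfl | hbb0
      · exact mem_insert_self _ _
      · refine mem_insert_of_mem ?_
        have hfib : Ξ'.filter (fun p => p.2 = b) = Ξ.filter (fun p => p.2 = b) := by
          rw [hΞ', Finset.filter_filter]
          apply Finset.filter_congr
          intro p _
          constructor
          · intro h; exact h.2
          · intro h; exact ⟨fun hc => hbb0 (h ▸ hc ▸ rfl), h⟩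
        rw [mem_filter]
        constructor
        · rw [mem_image] at hbim ⊢
          obtain ⟨p, hp, rfl⟩ := hbim
          exact ⟨p, by rw [hΞ', mem_filter]; exact ⟨hp, fun hc => hbb0 hc⟩, rfl⟩
        · rw [hfib, ← hdeg]; exact hbc
    calc ((Ξ.image Prod.snd).filter fun b =>
          G.natDegree < (Ξ.filter fun p => p.2 = b).card).card
        ≤ (insert b0 ((Ξ'.image Prod.snd).filter fun b =>
            H.natDegree < (Ξ'.filter fun p => p.2 = b).card)).card := Finset.card_le_card hsub
      _ ≤ ((Ξ'.image Prod.snd).filter fun b =>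
            H.natDegree < (Ξ'.filter fun p => p.2 = b).card).card + 1 :=
          Finset.card_insert_le _ _
      _ ≤ H.leadingCoeff.natDegree + 1 := by omega
      _ = G.leadingCoeff.natDegree := hlcdeg.symm
  · rw [Finset.not_nonempty_iff_eq_empty] at hne
    rw [hne]
    simp

noncomputable def T' {F : Type*} [Field F] : MvPolynomial (Fin 2) F →+* Polynomial (Polynomial F) :=
  MvPolynomial.eval₂Hom (Polynomial.C.comp Polynomial.C)
    (fun i => if i = 0 then Polynomial.X else Polynomial.C Polynomial.X)

noncomputable def e' : ℕ × ℕ → (Fin 2 →₀ ℕ) := fun ij => Finsupp.single 0 ij.1 + Finsupp.single 1 ij.2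

@[simp] lemma e'_apply0 (ij : ℕ × ℕ) : e' ij 0 = ij.1 := by
  simp [e', Finsupp.single_apply]

@[simp] lemma e'_apply1 (ij : ℕ × ℕ) : e' ij 1 = ij.2 := by
  simp [e', Finsupp.single_apply]

lemma finsupp_fin2_eq_iff (d d' : Fin 2 →₀ ℕ) : d = d' ↔ d 0 = d' 0 ∧ d 1 = d' 1 := by
  constructor
  · rintro rfl; exact ⟨rfl, rfl⟩
  · rintro ⟨h0, h1⟩; ext i; fin_cases i <;> assumption

lemma e'_injective : Function.Injective e' := by
  intro a b h
  have h0 := congrArg (fun d => d 0) h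
  have h1 := congrArg (fun d => d 1) h
  simp at h0 h1
  exact Prod.ext h0 h1

lemma T'_monomial {F : Type*} [Field F] (d : Fin 2 →₀ ℕ) (c : F) :
    T' (MvPolynomial.monomial d c) =
      Polynomial.C (Polynomial.C c * Polynomial.X ^ (d 1)) * Polynomial.X ^ (d 0) := by
  rw [T', MvPolynomial.eval₂Hom_monomial]
  rw [Finsupp.prod_fintype _ _ (by intro i; simp)]
  rw [Fin.prod_univ_two]
  rw [if_pos rfl, if_neg (show ¬(1:Fin 2) = 0 by norm_num), map_mul, map_pow]
  simp only [RingHom.comp_apply]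
  ring

lemma coeff_T' {F : Type*} [Field F] (p : MvPolynomial (Fin 2) F) (d : Fin 2 →₀ ℕ) :
    MvPolynomial.coeff d p = ((T' p).coeff (d 0)).coeff (d 1) := by
  induction p using MvPolynomial.induction_on' with
  | add p q hp hq => simp [map_add, hp, hq]
  | monomial d' c =>
    rw [T'_monomial, MvPolynomial.coeff_monomial, Polynomial.coeff_C_mul,
      Polynomial.coeff_X_pow]
    by_cases h0 : d 0 = d' 0
    · rw [if_pos h0, mul_one, Polynomial.coeff_C_mul, Polynomial.coeff_X_pow]
      by_cases h1 : d 1 = d' 1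
      · rw [if_pos h1, mul_one, if_pos ((finsupp_fin2_eq_iff d' d).mpr ⟨h0.symm, h1.symm⟩)]
      · rw [if_neg h1, mul_zero, if_neg (fun hc : d' = d => h1 (by rw [hc]))]
    · rw [if_neg h0, mul_zero, Polynomial.coeff_zero,
        if_neg (fun hc : d' = d => h0 (by rw [hc]))]

lemma evalAt_T' {F : Type*} [Field F] (ξ : F × F) (p : MvPolynomial (Fin 2) F) :
    MvPolynomial.eval ![ξ.1, ξ.2] p
      = Polynomial.eval ξ.1 ((T' p).map (Polynomial.evalRingHom ξ.2)) := by
  have : (MvPolynomial.eval ![ξ.1, ξ.2] : MvPolynomial (Fin 2) F →+* F)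
      = ((Polynomial.evalRingHom ξ.1).comp
          ((Polynomial.mapRingHom (Polynomial.evalRingHom ξ.2)).comp (T' : MvPolynomial (Fin 2) F →+* Polynomial (Polynomial F)))) := by
    apply MvPolynomial.ringHom_ext
    · intro r
      simp [T']
    · intro i
      fin_cases i <;> simp [T']
  exact congrFun (congrArg (fun f => f.toFun) this) p

lemma T'_ne_zero {F : Type*} [Field F] {p : MvPolynomial (Fin 2) F} (hp : p ≠ 0) :
    T' p ≠ 0 := by
  obtain ⟨d, hd⟩ := MvPolynomial.ne_zero_iff.mp hp
  rw [coeff_T'] at hd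
  intro h
  rw [h] at hd
  simp at hd

lemma e'_pair_mem_support {F : Type*} [Field F] {p : MvPolynomial (Fin 2) F} (hp : p ≠ 0) :
    e' ((T' p).natDegree, (T' p).leadingCoeff.natDegree) ∈ p.support := by
  rw [MvPolynomial.mem_support_iff, coeff_T', e'_apply0, e'_apply1]
  rw [Polynomial.coeff_natDegree, Polynomial.coeff_natDegree]
  exact Polynomial.leadingCoeff_ne_zero.mpr (Polynomial.leadingCoeff_ne_zero.mpr (T'_ne_zero hp))

lemma lexDeg_spec {F : Type*} [Field F] {p : MvPolynomial (Fin 2) F} (hp : p ≠ 0) :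
    lexDeg p = ((toLex ((T' p).natDegree, (T' p).leadingCoeff.natDegree) : ℕ ×ₗ ℕ) : WithBot (ℕ ×ₗ ℕ)) := by
  apply le_antisymm
  · apply Finset.max_le
    intro a ha
    rw [Finset.mem_image] at ha
    obtain ⟨d, hd, rfl⟩ := ha
    rw [MvPolynomial.mem_support_iff, coeff_T'] at hd
    have h1 : (T' p).coeff (d 0) ≠ 0 := fun hc => hd (by rw [hc]; simp)
    have hd0 : d 0 ≤ (T' p).natDegree := Polynomial.le_natDegree_of_ne_zero h1
    rw [WithBot.coe_le_coe, Prod.Lex.le_iff]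
    rcases hd0.lt_or_eq with h | h
    · exact Or.inl h
    · refine Or.inr ⟨h, ?_⟩
      apply Polynomial.le_natDegree_of_ne_zero
      rw [← Polynomial.coeff_natDegree, ← h]
      exact hd
  · have := Finset.le_max (Finset.mem_image_of_mem (fun d => toLex (d 0, d 1))
      (e'_pair_mem_support hp))
    simpa [lexDeg] using this

lemma lexDeg_zero {F : Type*} [Field F] : lexDeg (0 : MvPolynomial (Fin 2) F) = ⊥ := by
  simp [lexDeg]

lemma evalAt_T'' {F : Type*} [Field F] (ξ : F × F) (p : MvPolynomial (Fin 2) F) :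
    evalAt ξ p = Polynomial.eval ξ.1 ((T' p).map (Polynomial.evalRingHom ξ.2)) :=
  evalAt_T' ξ p

lemma evalAt_sub {F : Type*} [Field F] (ξ : F × F) (p q : MvPolynomial (Fin 2) F) :
    evalAt ξ (p - q) = evalAt ξ p - evalAt ξ q := by
  simp [evalAt]

noncomputable def suppSub (F : Type*) [Field F] (S : Finset (ℕ × ℕ)) :
    Submodule F (MvPolynomial (Fin 2) F) where
  carrier := {p | ∀ d ∈ p.support, ∃ ij ∈ S, d = e' ij}
  add_mem' := by
    intro a b ha hb d hd
    rcases Finset.mem_union.mp (MvPolynomial.support_add hd) with h | h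
    · exact ha d h
    · exact hb d h
  zero_mem' := by simp
  smul_mem' := by
    intro c p hp d hd
    exact hp d (MvPolynomial.support_smul hd)

lemma gen_eq {F : Type*} [Field F] (ij : ℕ × ℕ) :
    (X 0 : MvPolynomial (Fin 2) F) ^ ij.1 * X 1 ^ ij.2 = MvPolynomial.monomial (e' ij) 1 := by
  rw [MvPolynomial.X_pow_eq_monomial, MvPolynomial.X_pow_eq_monomial,
    MvPolynomial.monomial_mul, one_mul]
  rfl

lemma support_subset_of_mem_monSpan {F : Type*} [Field F] {S : Finset (ℕ × ℕ)}
    {p : MvPolynomial (Fin 2) F} (hp : p ∈ monSpan F S) :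
    ∀ d ∈ p.support, ∃ ij ∈ S, d = e' ij := by
  classical
  have hle : monSpan F S ≤ suppSub F S := by
    rw [monSpan, Submodule.span_le]
    rintro q ⟨ij, hij, rfl⟩
    intro d hd
    change d ∈ ((X 0 : MvPolynomial (Fin 2) F) ^ ij.1 * X 1 ^ ij.2).support at hd
    rw [gen_eq, MvPolynomial.support_monomial] at hd
    simp only [one_ne_zero, if_false] at hd
    rw [Finset.mem_singleton] at hd
    exact ⟨ij, hij, hd⟩
  exact hle hp

lemma filter_card_countP {β : Type*} [DecidableEq β] (t : Finset β) (f : β → ℕ) (α : ℕ) :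
    ((t.filter fun b => α < f b)).card = Multiset.countP (fun n => α < n) (t.val.map f) := by
  rw [Multiset.countP_map]
  rfl

lemma bridge {F : Type*} [Field F] [DecidableEq F] {Ξ : Finset (F × F)} {S : Finset (ℕ × ℕ)}
    (hS : IsSx Ξ S) (α : ℕ) :
    ((Ξ.image Prod.snd).filter fun b => α < (Ξ.filter fun p => p.2 = b).card).card
      = ((S.image Prod.snd).filter fun j => α < (S.filter fun p => p.2 = j).card).card := by
  rw [filter_card_countP, filter_card_countP,
    show ((Ξ.image Prod.snd).val.map fun b => (Ξ.filter fun p => p.2 = b).card)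
      = rowCounts Ξ from rfl,
    show ((S.image Prod.snd).val.map fun j => (S.filter fun p => p.2 = j).card)
      = rowCountsA S from rfl,
    hS.2]

lemma mem_lt_colcount {S : Finset (ℕ × ℕ)} (hL : IsLowerSet2 S) {α β : ℕ} (h : (α, β) ∈ S) :
    β < ((S.image Prod.snd).filter fun j => α < (S.filter fun p => p.2 = j).card).card := by
  have hsub : Finset.range (β + 1) ⊆
      (S.image Prod.snd).filter fun j => α < (S.filter fun p => p.2 = j).card := by
    intro j hj
    rw [Finset.mem_range, Nat.lt_succ_iff] at hj
    have hmemj : (α, j) ∈ S := hL (α, β) h (α, j) le_rfl hj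
    rw [Finset.mem_filter]
    refine ⟨Finset.mem_image_of_mem _ hmemj, ?_⟩
    have hsub2 : Finset.range (α + 1) ⊆ (S.filter fun p => p.2 = j).image Prod.fst := by
      intro i hi
      rw [Finset.mem_range, Nat.lt_succ_iff] at hi
      rw [Finset.mem_image]
      exact ⟨(i, j), Finset.mem_filter.mpr ⟨hL (α, j) hmemj (i, j) hi le_rfl, rfl⟩, rfl⟩
    calc α < α + 1 := Nat.lt_succ_self α
      _ = (Finset.range (α + 1)).card := (Finset.card_range _).symm
      _ ≤ ((S.filter fun p => p.2 = j).image Prod.fst).card := Finset.card_le_card hsub2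
      _ ≤ (S.filter fun p => p.2 = j).card := Finset.card_image_le
  calc β < β + 1 := Nat.lt_succ_self β
    _ = (Finset.range (β + 1)).card := (Finset.card_range _).symm
    _ ≤ _ := Finset.card_le_card hsub

lemma card_eq_sum_rowlike {γ δ : Type*} [DecidableEq δ] (t : Finset (γ × δ)) :
    t.card = ((t.image Prod.snd).val.map fun b => (t.filter fun p => p.2 = b).card).sum := by
  rw [Finset.card_eq_sum_card_fiberwise (f := Prod.snd) (t := t.image Prod.snd)
    (fun x hx => Finset.mem_image_of_mem _ hx)]
  rfl

lemma card_S_eq {F : Type*} [Field F] [DecidableEq F] {Ξ : Finset (F × F)} {S : Finset (ℕ × ℕ)}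
    (hS : IsSx Ξ S) : S.card = Ξ.card := by
  have h1 := card_eq_sum_rowlike S
  have h2 := card_eq_sum_rowlike Ξ
  rw [show ((S.image Prod.snd).val.map fun b => (S.filter fun p => p.2 = b).card)
      = rowCountsA S from rfl, hS.2] at h1
  rw [show ((Ξ.image Prod.snd).val.map fun b => (Ξ.filter fun p => p.2 = b).card)
      = rowCounts Ξ from rfl] at h2
  rw [h1, h2]

lemma not_mem_S_of_vanishing {F : Type*} [Field F] [DecidableEq F] {Ξ : Finset (F × F)}
    {S : Finset (ℕ × ℕ)} (hS : IsSx Ξ S) {g : MvPolynomial (Fin 2) F} (hg : g ≠ 0)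
    (hv : ∀ ξ ∈ Ξ, evalAt ξ g = 0) :
    ((T' g).natDegree, (T' g).leadingCoeff.natDegree) ∉ S := by
  intro hmem
  have h1 := mem_lt_colcount hS.1 hmem
  rw [← bridge hS] at h1
  have h2 := key_aux Ξ (T' g) (T'_ne_zero hg) (fun ξ hξ => by
    rw [← evalAt_T'']; exact hv ξ hξ)
  exact absurd h2 h1.not_ge

lemma pair_mem_S {F : Type*} [Field F] {S : Finset (ℕ × ℕ)} {p : MvPolynomial (Fin 2) F}
    (hp : p ∈ monSpan F S) (hne : p ≠ 0) :
    ((T' p).natDegree, (T' p).leadingCoeff.natDegree) ∈ S := by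
  obtain ⟨ij, hij, hd⟩ := support_subset_of_mem_monSpan hp _ (e'_pair_mem_support hne)
  rwa [e'_injective hd]

lemma vanish_zero {F : Type*} [Field F] [DecidableEq F] {Ξ : Finset (F × F)}
    {S : Finset (ℕ × ℕ)} (hS : IsSx Ξ S) {p : MvPolynomial (Fin 2) F}
    (hp : p ∈ monSpan F S) (hv : ∀ ξ ∈ Ξ, evalAt ξ p = 0) : p = 0 := by
  by_contra hne
  exact not_mem_S_of_vanishing hS hne hv (pair_mem_S hp hne)

noncomputable def EVmap (F : Type*) [Field F] (Ξ : Finset (F × F)) :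
    MvPolynomial (Fin 2) F →ₗ[F] (↥Ξ → F) where
  toFun p ξ := evalAt (ξ : F × F) p
  map_add' p q := by funext ξ; simp [evalAt]
  map_smul' c p := by funext ξ; simp [evalAt, MvPolynomial.smul_eval]

noncomputable def Mmap (F : Type*) [Field F] (S : Finset (ℕ × ℕ)) :
    (↥S → F) →ₗ[F] MvPolynomial (Fin 2) F where
  toFun c := ∑ x ∈ S.attach, MvPolynomial.monomial (e' x.1) (c x)
  map_add' a b := by
    simp [map_add, Finset.sum_add_distrib]
  map_smul' c a := by
    simp [Finset.smul_sum, MvPolynomial.smul_monomial]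

lemma coeff_Mmap {F : Type*} [Field F] {S : Finset (ℕ × ℕ)} (c : ↥S → F) (x : ↥S) :
    MvPolynomial.coeff (e' x.1) (Mmap F S c) = c x := by
  show MvPolynomial.coeff (e' x.1) (∑ y ∈ S.attach, MvPolynomial.monomial (e' y.1) (c y)) = c x
  rw [MvPolynomial.coeff_sum, Finset.sum_eq_single x]
  · rw [MvPolynomial.coeff_monomial, if_pos rfl]
  · intro b _ hbx
    rw [MvPolynomial.coeff_monomial, if_neg fun hc => hbx (Subtype.ext (e'_injective hc))]
  · intro hx
    exact absurd (Finset.mem_attach _ x) hx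

lemma Mmap_mem {F : Type*} [Field F] {S : Finset (ℕ × ℕ)} (c : ↥S → F) :
    Mmap F S c ∈ monSpan F S := by
  apply Submodule.sum_mem
  intro x _
  have h : MvPolynomial.monomial (e' x.1) (c x)
      = c x • ((X 0 : MvPolynomial (Fin 2) F) ^ x.1.1 * X 1 ^ x.1.2) := by
    rw [gen_eq, MvPolynomial.smul_monomial, smul_eq_mul, mul_one]
  rw [h]
  exact Submodule.smul_mem _ _ (Submodule.subset_span ⟨x.1, x.2, rfl⟩)

end Aux

/-- `Span_F{x^i y^j : (i,j) ∈ S_x(Ξ)}` is a degree reducing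
interpolation space for `Ξ` w.r.t. the lexicographic order (`x` compared first):
it is an interpolation space, and the interpolant of any polynomial `q` from it
has `≺_lex`-leading exponent not exceeding that of `q`. -/
theorem Sx_span_degree_reducing_lex {F : Type*} [Field F] [DecidableEq F]
    (Ξ : Finset (F × F)) (S : Finset (ℕ × ℕ)) (hS : IsSx Ξ S) :
    IsRegularScheme Ξ S ∧
      ∀ q p : MvPolynomial (Fin 2) F, p ∈ monSpan F S →
        (∀ ξ ∈ Ξ, evalAt ξ p = evalAt ξ q) → lexDeg p ≤ lexDeg q := by
  constructor
  · -- regularity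
    intro f
    set K := (EVmap F Ξ).comp (Mmap F S) with hK
    have h0 : ∀ c, K c = 0 → c = 0 := by
      intro c hc
      have hp0 : Mmap F S c = 0 :=
        vanish_zero hS (Mmap_mem c) (fun ξ hξ => congrFun hc ⟨ξ, hξ⟩)
      funext x
      have := coeff_Mmap c x
      rw [hp0] at this
      simpa using this.symm
    have hKinj : Function.Injective K := by
      intro a b hab
      have := h0 (a - b) (by rw [map_sub, hab, sub_self])
      exact sub_eq_zero.mp this
    have hsurj : Function.Surjective K := by
      have hfr : Module.finrank F (↥S → F) = Module.finrank F (↥Ξ → F) := by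
        rw [Module.finrank_pi, Module.finrank_pi, Fintype.card_coe, Fintype.card_coe,
          card_S_eq hS]
      exact (LinearMap.injective_iff_surjective_of_finrank_eq_finrank hfr).mp hKinj
    obtain ⟨c, hc⟩ := hsurj (fun ξ => f ξ)
    refine ⟨Mmap F S c, ⟨Mmap_mem c, fun ξ hξ => congrFun hc ⟨ξ, hξ⟩⟩, ?_⟩
    rintro p ⟨hpmem, hpev⟩
    have hsubmem : p - Mmap F S c ∈ monSpan F S :=
      Submodule.sub_mem _ hpmem (Mmap_mem c)
    have hz : p - Mmap F S c = 0 := by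
      apply vanish_zero hS hsubmem
      intro ξ hξ
      rw [evalAt_sub, hpev ξ hξ]
      have h2 : evalAt ξ (Mmap F S c) = f ξ := congrFun hc ⟨ξ, hξ⟩
      rw [h2, sub_self]
    exact sub_eq_zero.mp hz
  · -- degree reduction
    intro q p hp hag
    rcases eq_or_ne p 0 with rfl | hpne
    · rw [lexDeg_zero]; exact bot_le
    by_contra hlt'
    have hlt : lexDeg q < lexDeg p := lt_of_not_ge hlt'
    have hgne : p - q ≠ 0 := by
      intro h
      rw [sub_eq_zero.mp h] at hlt
      exact lt_irrefl _ hlt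
    have hgv : ∀ ξ ∈ Ξ, evalAt ξ (p - q) = 0 := fun ξ hξ => by
      rw [evalAt_sub, hag ξ hξ, sub_self]
    have hple := lexDeg_spec hpne
    have hgle := lexDeg_spec hgne
    have hup : lexDeg (p - q) ≤ lexDeg p := by
      apply Finset.max_le
      intro a ha
      rw [Finset.mem_image] at ha
      obtain ⟨d, hd, rfl⟩ := ha
      rcases Finset.mem_union.mp (MvPolynomial.support_sub _ p q hd) with h | h
      · exact Finset.le_max (Finset.mem_image_of_mem _ h)
      · have h2 : ((toLex (d 0, d 1) : ℕ ×ₗ ℕ) : WithBot (ℕ ×ₗ ℕ)) ≤ lexDeg q :=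
          Finset.le_max (Finset.mem_image_of_mem (fun d => toLex (d 0, d 1)) h)
        exact le_trans h2 hlt.le
    have hdown : lexDeg p ≤ lexDeg (p - q) := by
      have hmem : e' ((T' p).natDegree, (T' p).leadingCoeff.natDegree) ∈ (p - q).support := by
        rw [MvPolynomial.mem_support_iff, MvPolynomial.coeff_sub]
        have hq0 : MvPolynomial.coeff (e' ((T' p).natDegree, (T' p).leadingCoeff.natDegree)) q
            = 0 := by
          by_contra hq
          have hle : ((toLex ((T' p).natDegree, (T' p).leadingCoeff.natDegree) : ℕ ×ₗ ℕ) :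
              WithBot (ℕ ×ₗ ℕ)) ≤ lexDeg q := by
            have := Finset.le_max (Finset.mem_image_of_mem (fun d => toLex (d 0, d 1))
              (MvPolynomial.mem_support_iff.mpr hq))
            simpa [lexDeg] using this
          rw [← hple] at hle
          exact absurd hle hlt.not_ge
        rw [hq0, sub_zero]
        exact MvPolynomial.mem_support_iff.mp (e'_pair_mem_support hpne)
      have := Finset.le_max (Finset.mem_image_of_mem (fun d => toLex (d 0, d 1)) hmem)
      rw [hple]
      simpa [lexDeg] using this
    have heq : lexDeg (p - q) = lexDeg p := le_antisymm hup hdown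
    rw [hgle, hple] at heq
    have hpair : ((T' (p - q)).natDegree, (T' (p - q)).leadingCoeff.natDegree)
        = ((T' p).natDegree, (T' p).leadingCoeff.natDegree) :=
      toLex.injective (WithBot.coe_injective heq)
    exact not_mem_S_of_vanishing hS hgne hgv (hpair ▸ pair_mem_S hp hpne)
end

section
/- Let Ξ ⊂ F² be a finite set of distinct points with associated lower set S_y(Ξ). Then {x^i y^j : (i,j) ∈ S_y(Ξ)} is the Gröbner éscalier of the vanishing ideal I(Ξ) with respect to the inverse lexicographic order ≺_inlex, i.e. it is exactly the set of monomials not divisible by any leading monomial of I(Ξ) under ≺_inlex. -/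
open MvPolynomial Finset

set_option linter.unusedSectionVars false
set_option linter.unusedVariables false
set_option maxHeartbeats 1000000

section Aux
variable {F : Type*} [Field F] [DecidableEq F]

private lemma mem_vi {Ξ : Finset (F × F)} {g : MvPolynomial (Fin 2) F} :
    g ∈ vanishingIdeal F Ξ ↔ ∀ ξ ∈ Ξ, MvPolynomial.eval ![ξ.1, ξ.2] g = 0 := by
  simp only [_root_.vanishingIdeal, Ideal.mem_iInf, RingHom.mem_ker]

private lemma card_filter_countP {α : Type*} (s : Finset α) (p : α → Prop) [DecidablePred p] :
    (s.filter p).card = s.1.countP p := by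
  rw [Multiset.countP_eq_card_filter]; rfl

private lemma count_cols {Ξ : Finset (F × F)} {S : Finset (ℕ × ℕ)}
    (h : colCountsA S = colCounts Ξ) (t : ℕ) :
    ((S.image Prod.fst).filter fun k => t < (S.filter fun p => p.1 = k).card).card
      = ((Ξ.image Prod.fst).filter fun a => t < (Ξ.filter fun p => p.1 = a).card).card := by
  have h2 := congrArg (Multiset.countP fun n => t < n) h
  rw [colCountsA, colCounts, Multiset.countP_map, Multiset.countP_map] at h2
  rw [card_filter_countP, card_filter_countP]
  simpa [Multiset.countP_eq_card_filter] using h2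

private lemma lower_mem_of_lt_card {S : Finset (ℕ × ℕ)} (hL : IsLowerSet2 S) {k t : ℕ}
    (h : t < (S.filter fun p => p.1 = k).card) : (k, t) ∈ S := by
  by_contra hkt
  have hsub : (S.filter fun p => p.1 = k) ⊆ (Finset.range t).image fun u => (k, u) := by
    intro p hp
    rw [Finset.mem_filter] at hp
    have hlt : p.2 < t := by
      by_contra hge
      exact hkt (hL p hp.1 (k, t) (hp.2 ▸ le_refl k) (not_lt.mp hge))
    rw [Finset.mem_image]
    exact ⟨p.2, Finset.mem_range.mpr hlt, by rw [← hp.2]⟩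
  have h1 := Finset.card_le_card hsub
  have h2 : ((Finset.range t).image fun u => (k, u)).card ≤ t :=
    Finset.card_image_le.trans (by simp)
  omega

private noncomputable def px (p : Polynomial F) : MvPolynomial (Fin 2) F :=
  Polynomial.eval₂ MvPolynomial.C (X 0) p

private noncomputable def py (p : Polynomial F) : MvPolynomial (Fin 2) F :=
  Polynomial.eval₂ MvPolynomial.C (X 1) p

private lemma single_add_single_eq (k l : ℕ) (e : Fin 2 →₀ ℕ) :
    (Finsupp.single (0 : Fin 2) k + Finsupp.single 1 l = e) ↔ (l = e 1 ∧ k = e 0) := by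
  constructor
  · intro h
    constructor
    · have := congrArg (fun f => f 1) h; simpa using this
    · have := congrArg (fun f => f 0) h; simpa using this
  · rintro ⟨rfl, rfl⟩
    ext a; fin_cases a <;> simp

private lemma px_eq_sum (p : Polynomial F) :
    px p = ∑ k ∈ p.support, MvPolynomial.monomial (Finsupp.single (0 : Fin 2) k) (p.coeff k) := by
  rw [px, Polynomial.eval₂_eq_sum, Polynomial.sum_def]
  refine Finset.sum_congr rfl fun k _ => ?_
  rw [MvPolynomial.X_pow_eq_monomial, MvPolynomial.C_mul_monomial, mul_one]

private lemma py_eq_sum (p : Polynomial F) :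
    py p = ∑ k ∈ p.support, MvPolynomial.monomial (Finsupp.single (1 : Fin 2) k) (p.coeff k) := by
  rw [py, Polynomial.eval₂_eq_sum, Polynomial.sum_def]
  refine Finset.sum_congr rfl fun k _ => ?_
  rw [MvPolynomial.X_pow_eq_monomial, MvPolynomial.C_mul_monomial, mul_one]

private lemma coeff_px_py (p q : Polynomial F) (e : Fin 2 →₀ ℕ) :
    MvPolynomial.coeff e (px p * py q) = p.coeff (e 0) * q.coeff (e 1) := by
  rw [px_eq_sum, py_eq_sum, Finset.sum_mul_sum]
  simp_rw [MvPolynomial.monomial_mul, MvPolynomial.coeff_sum, MvPolynomial.coeff_monomial,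
    single_add_single_eq, ite_and, Finset.sum_ite_eq' q.support (e 1)]
  by_cases h1 : e 1 ∈ q.support
  · simp only [if_pos h1]
    rw [Finset.sum_ite_eq' p.support (e 0)]
    by_cases h0 : e 0 ∈ p.support
    · simp [h0]
    · simp [h0, Polynomial.notMem_support_iff.mp h0]
  · simp [h1, Polynomial.notMem_support_iff.mp h1]

private lemma eval_px (f : Fin 2 → F) (p : Polynomial F) :
    MvPolynomial.eval f (px p) = p.eval (f 0) := by
  rw [px, Polynomial.hom_eval₂]
  have h : (MvPolynomial.eval f).comp (MvPolynomial.C : F →+* MvPolynomial (Fin 2) F)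
      = RingHom.id F := RingHom.ext fun a => by simp
  rw [h, MvPolynomial.eval_X]
  rfl

private lemma eval_py (f : Fin 2 → F) (p : Polynomial F) :
    MvPolynomial.eval f (py p) = p.eval (f 1) := by
  rw [py, Polynomial.hom_eval₂]
  have h : (MvPolynomial.eval f).comp (MvPolynomial.C : F →+* MvPolynomial (Fin 2) F)
      = RingHom.id F := RingHom.ext fun a => by simp
  rw [h, MvPolynomial.eval_X]
  rfl

private lemma backward {Ξ : Finset (F × F)} {S : Finset (ℕ × ℕ)}
    (hL : IsLowerSet2 S) (hcc : colCountsA S = colCounts Ξ) {i j : ℕ} (hij : (i, j) ∉ S) :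
    ∃ g ∈ vanishingIdeal F Ξ, g ≠ 0 ∧ ∃ d ∈ g.support,
      (∀ e ∈ g.support, toLex ((e 1 : ℕ), (e 0 : ℕ)) ≤ toLex ((d 1 : ℕ), (d 0 : ℕ))) ∧
      d 0 ≤ i ∧ d 1 ≤ j := by
  classical
  set B : Finset F := (Ξ.image Prod.fst).filter (fun a => j < (Ξ.filter fun p => p.1 = a).card)
    with hB
  set m := B.card with hm
  -- m ≤ i
  have hmi : m ≤ i := by
    have h1 := count_cols hcc j
    rw [← hB] at h1
    have hsub : (S.image Prod.fst).filter (fun k => j < (S.filter fun p => p.1 = k).card)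
        ⊆ Finset.range i := by
      intro k hk
      rw [Finset.mem_filter] at hk
      have hkj : (k, j) ∈ S := lower_mem_of_lt_card hL hk.2
      rw [Finset.mem_range]
      by_contra hik
      exact hij (hL (k, j) hkj (i, j) (not_lt.mp hik) le_rfl)
    have h2 := Finset.card_le_card hsub
    rw [Finset.card_range] at h2
    omega
  set A' : Finset F := (Ξ.image Prod.fst) \ B with hA'
  set T : F → Finset F := fun a => (Ξ.filter fun p => p.1 = a).image Prod.snd with hT
  have hTcard : ∀ a : F, (T a).card = (Ξ.filter fun p => p.1 = a).card := by
    intro a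
    apply Finset.card_image_of_injOn
    intro p hp p' hp' hpp
    rw [Finset.mem_coe, Finset.mem_filter] at hp hp'
    exact Prod.ext (hp.2.trans hp'.2.symm) hpp
  have hTle : ∀ a ∈ A', (T a).card ≤ j := by
    intro a ha
    rw [hA', Finset.mem_sdiff, hB, Finset.mem_filter] at ha
    rw [hTcard]
    by_contra hgt
    exact ha.2 ⟨ha.1, by omega⟩
  set R : F → Polynomial F := fun a =>
    Polynomial.X ^ (j - (T a).card) * ∏ b ∈ T a, (Polynomial.X - Polynomial.C b) with hR
  have hRmonic : ∀ a, (R a).Monic := fun a =>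
    (Polynomial.monic_X_pow _).mul
      (Polynomial.monic_prod_of_monic _ _ fun b _ => Polynomial.monic_X_sub_C b)
  have hRdeg : ∀ a ∈ A', (R a).natDegree = j := by
    intro a ha
    rw [hR]
    rw [Polynomial.Monic.natDegree_mul (Polynomial.monic_X_pow _)
      (Polynomial.monic_prod_of_monic _ _ fun b _ => Polynomial.monic_X_sub_C b),
      Polynomial.natDegree_X_pow, Polynomial.natDegree_prod_of_monic _ _
      (fun b _ => Polynomial.monic_X_sub_C b)]
    simp only [Polynomial.natDegree_X_sub_C, Finset.sum_const, smul_eq_mul, mul_one]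
    have := hTle a ha
    omega
  set D : F → Polynomial F := fun a => R a - Polynomial.X ^ j with hD
  have hDdeg : ∀ a ∈ A', (D a).degree < (j : WithBot ℕ) := by
    intro a ha
    have hRd : (R a).degree = (j : WithBot ℕ) := by
      rw [Polynomial.degree_eq_natDegree (hRmonic a).ne_zero, hRdeg a ha]
    have hXd : ((Polynomial.X : Polynomial F) ^ j).degree = (j : WithBot ℕ) :=
      Polynomial.degree_X_pow j
    have hdeg : (R a).degree = ((Polynomial.X : Polynomial F) ^ j).degree := by
      rw [hRd, hXd]
    have hlc : (R a).leadingCoeff = ((Polynomial.X : Polynomial F) ^ j).leadingCoeff := by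
      rw [(hRmonic a).leadingCoeff, (Polynomial.monic_X_pow j).leadingCoeff]
    have h2 := Polynomial.degree_sub_lt hdeg (hRmonic a).ne_zero hlc
    rw [hRd] at h2
    exact h2
  have hDcoeff : ∀ a ∈ A', ∀ t, j ≤ t → (D a).coeff t = 0 := by
    intro a ha t ht
    apply Polynomial.coeff_eq_zero_of_degree_lt
    exact lt_of_lt_of_le (hDdeg a ha) (by exact_mod_cast ht)
  set P : Polynomial F := ∏ a ∈ B, (Polynomial.X - Polynomial.C a) with hP
  have hPmonic : P.Monic :=
    Polynomial.monic_prod_of_monic _ _ fun a _ => Polynomial.monic_X_sub_C a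
  have hPdeg : P.natDegree = m := by
    rw [hP, Polynomial.natDegree_prod_of_monic _ _ (fun a _ => Polynomial.monic_X_sub_C a)]
    simp [hm]
  set L : F → Polynomial F := fun a => Lagrange.basis A' id a with hLdef
  set g : MvPolynomial (Fin 2) F :=
    px P * py (Polynomial.X ^ j) + ∑ a ∈ A', px (P * L a) * py (D a) with hg
  have hcoeff : ∀ e : Fin 2 →₀ ℕ, MvPolynomial.coeff e g
      = P.coeff (e 0) * ((Polynomial.X : Polynomial F) ^ j).coeff (e 1)
        + ∑ a ∈ A', (P * L a).coeff (e 0) * (D a).coeff (e 1) := by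
    intro e
    rw [hg, MvPolynomial.coeff_add, coeff_px_py, MvPolynomial.coeff_sum]
    simp_rw [coeff_px_py]
  set d : Fin 2 →₀ ℕ := Finsupp.single (0 : Fin 2) m + Finsupp.single 1 j with hd
  have hd0 : d 0 = m := by simp [hd, Finsupp.single_apply]
  have hd1 : d 1 = j := by simp [hd, Finsupp.single_apply]
  have hcd : MvPolynomial.coeff d g = 1 := by
    rw [hcoeff, hd0, hd1]
    rw [Finset.sum_eq_zero (fun a ha => by rw [hDcoeff a ha j le_rfl, mul_zero])]
    rw [Polynomial.coeff_X_pow_self, ← hPdeg, hPmonic.coeff_natDegree]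
    ring
  have hdsupp : d ∈ g.support := by
    rw [MvPolynomial.mem_support_iff, hcd]; exact one_ne_zero
  refine ⟨g, ?_, ?_, d, hdsupp, ?_, by rw [hd0]; exact hmi, by rw [hd1]⟩
  · -- vanishing
    rw [mem_vi]
    rintro ⟨a, b⟩ hab
    have heval : MvPolynomial.eval ![a, b] g
        = P.eval a * (b ^ j + ∑ a' ∈ A', (L a').eval a * ((D a').eval b)) := by
      rw [hg, map_add, map_mul, eval_px, eval_py, map_sum]
      simp_rw [map_mul, eval_px, eval_py, Polynomial.eval_mul]
      simp only [Matrix.cons_val_zero, Matrix.cons_val_one, Matrix.head_cons,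
        Polynomial.eval_pow, Polynomial.eval_X]
      rw [mul_add, Finset.mul_sum]
      exact congrArg (HAdd.hAdd _) (Finset.sum_congr rfl fun a' _ => by ring)
    rw [heval]
    by_cases haB : a ∈ B
    · have hPa : P.eval a = 0 := by
        rw [hP, Polynomial.eval_prod]
        exact Finset.prod_eq_zero haB (by simp)
      rw [hPa, zero_mul]
    · have haA' : a ∈ A' :=
        Finset.mem_sdiff.mpr ⟨Finset.mem_image.mpr ⟨(a, b), hab, rfl⟩, haB⟩
      have hbT : b ∈ T a :=
        Finset.mem_image.mpr ⟨(a, b), Finset.mem_filter.mpr ⟨hab, rfl⟩, rfl⟩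
      have h1 : (L a).eval a = 1 := by
        have := Lagrange.eval_basis_self (Set.injOn_id (A' : Set F)) haA'
        simpa [hLdef] using this
      have h0 : ∀ a' ∈ A', a' ≠ a → (L a').eval a = 0 := by
        intro a' _ hne
        have := Lagrange.eval_basis_of_ne (s := A') (v := (id : F → F)) hne haA'
        simpa [hLdef] using this
      have hsum : ∑ a' ∈ A', (L a').eval a * (D a').eval b = (D a).eval b := by
        rw [Finset.sum_eq_single_of_mem a haA' (fun a' ha' hne => by rw [h0 a' ha' hne, zero_mul]),
          h1, one_mul]
      rw [hsum]
      have hRb : (R a).eval b = 0 := by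
        rw [hR]
        simp only [Polynomial.eval_mul, Polynomial.eval_prod]
        rw [Finset.prod_eq_zero hbT (by simp)]
        ring
      have hDb : (D a).eval b = (R a).eval b - b ^ j := by simp [hD]
      rw [hDb, hRb]
      ring
  · -- g ≠ 0
    intro h
    rw [h] at hdsupp
    simp at hdsupp
  · -- maximality
    intro e he
    rw [MvPolynomial.mem_support_iff, hcoeff] at he
    rw [hd0, hd1, Prod.Lex.le_iff]
    rcases lt_trichotomy (e 1) j with h | h | h
    · exact Or.inl h
    · refine Or.inr ⟨h, ?_⟩
      rw [Finset.sum_eq_zero (fun a ha => by rw [hDcoeff a ha _ (le_of_eq h.symm), mul_zero]),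
        add_zero, h, Polynomial.coeff_X_pow_self, mul_one] at he
      exact hPdeg ▸ Polynomial.le_natDegree_of_ne_zero he
    · exfalso
      apply he
      rw [Finset.sum_eq_zero (fun a ha => by rw [hDcoeff a ha _ (le_of_lt h), mul_zero]),
        add_zero, Polynomial.coeff_X_pow, if_neg (by omega), mul_zero]
private lemma fin2_ext {e d : Fin 2 →₀ ℕ} (h0 : e 0 = d 0) (h1 : e 1 = d 1) : e = d := by
  ext a; fin_cases a <;> assumption

private lemma lower_lt_card {S : Finset (ℕ × ℕ)} (hL : IsLowerSet2 S) {k d0 d1 : ℕ}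
    (hd : (d0, d1) ∈ S) (hk : k ≤ d0) : d1 < (S.filter fun p => p.1 = k).card := by
  have hsub : (Finset.range (d1 + 1)).image (fun u => (k, u)) ⊆ S.filter fun p => p.1 = k := by
    intro p hp
    rw [Finset.mem_image] at hp
    obtain ⟨u, hu, rfl⟩ := hp
    rw [Finset.mem_range] at hu
    exact Finset.mem_filter.mpr ⟨hL (d0, d1) hd (k, u) hk (by omega), rfl⟩
  have hcard : ((Finset.range (d1 + 1)).image (fun u => (k, u))).card = d1 + 1 := by
    rw [Finset.card_image_of_injective _ (fun a b hab => (Prod.mk.injEq _ _ _ _).mp hab |>.2)]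
    simp
  have := Finset.card_le_card hsub
  omega

private lemma forward {Ξ : Finset (F × F)} {S : Finset (ℕ × ℕ)}
    (hL : IsLowerSet2 S) (hcc : colCountsA S = colCounts Ξ) {i j : ℕ} (hij : (i, j) ∈ S)
    {g : MvPolynomial (Fin 2) F} (hgI : g ∈ vanishingIdeal F Ξ) (hg0 : g ≠ 0)
    {d : Fin 2 →₀ ℕ} (hd : d ∈ g.support)
    (hmax : ∀ e ∈ g.support, toLex ((e 1 : ℕ), (e 0 : ℕ)) ≤ toLex ((d 1 : ℕ), (d 0 : ℕ)))
    (hdi : d 0 ≤ i) (hdj : d 1 ≤ j) : False := by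
  have hdS : (d 0, d 1) ∈ S := hL (i, j) hij (d 0, d 1) hdi hdj
  have hsupp : ∀ e ∈ g.support, e 1 ≤ d 1 ∧ (e 1 = d 1 → e 0 ≤ d 0) := by
    intro e he
    have h := hmax e he
    rw [Prod.Lex.le_iff] at h
    rcases h with h | ⟨h1, h2⟩
    · exact ⟨le_of_lt h, fun hh => absurd hh (by simp at h ⊢; omega)⟩
    · exact ⟨le_of_eq h1, fun _ => h2⟩
  -- the x-polynomial slice at y-degree d 1
  set c : Polynomial F :=
    ∑ e ∈ g.support.filter (fun e => e 1 = d 1), Polynomial.C (g.coeff e) * Polynomial.X ^ (e 0)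
    with hc
  have hcd : c.coeff (d 0) = g.coeff d := by
    have hside : ∀ e ∈ g.support.filter (fun e => e 1 = d 1), e ≠ d →
        (Polynomial.C (g.coeff e) * Polynomial.X ^ (e 0)).coeff (d 0) = 0 := by
      intro e he hne
      rw [Finset.mem_filter] at he
      rw [Polynomial.coeff_C_mul, Polynomial.coeff_X_pow]
      have hne0 : ¬(d 0 = e 0) := fun h => hne (fin2_ext h.symm he.2)
      simp [hne0]
    have hmemf : d ∈ g.support.filter (fun e => e 1 = d 1) := Finset.mem_filter.mpr ⟨hd, rfl⟩
    rw [hc, Polynomial.finset_sum_coeff, Finset.sum_eq_single_of_mem d hmemf hside]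
    simp
  have hc0 : c ≠ 0 := fun h => by
    rw [MvPolynomial.mem_support_iff] at hd
    rw [h, Polynomial.coeff_zero] at hcd
    exact hd hcd.symm
  have hcdeg : c.natDegree ≤ d 0 := by
    apply Polynomial.natDegree_sum_le_of_forall_le
    intro e he
    rw [Finset.mem_filter] at he
    refine le_trans (Polynomial.natDegree_C_mul_le _ _) ?_
    rw [Polynomial.natDegree_X_pow]
    exact (hsupp e he.1).2 he.2
  set B : Finset F := (Ξ.image Prod.fst).filter (fun a => d 1 < (Ξ.filter fun p => p.1 = a).card)
    with hB
  have hroot : ∀ a ∈ B, c.eval a = 0 := by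
    intro a ha
    rw [hB, Finset.mem_filter] at ha
    set q : Polynomial F :=
      ∑ e ∈ g.support, Polynomial.C (g.coeff e * a ^ (e 0)) * Polynomial.X ^ (e 1) with hqdef
    have hceval : c.eval a = q.coeff (d 1) := by
      rw [hc, hqdef, Polynomial.eval_finset_sum, Polynomial.finset_sum_coeff, Finset.sum_filter]
      refine Finset.sum_congr rfl fun e he => ?_
      rw [Polynomial.coeff_C_mul, Polynomial.coeff_X_pow]
      by_cases h : e 1 = d 1
      · simp [h]
      · simp [h, Ne.symm h]
    have hq : q = 0 := by
      by_contra hq0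
      have hqdeg : q.natDegree ≤ d 1 := by
        apply Polynomial.natDegree_sum_le_of_forall_le
        intro e he
        refine le_trans (Polynomial.natDegree_C_mul_le _ _) ?_
        rw [Polynomial.natDegree_X_pow]
        exact (hsupp e he).1
      set T : Finset F := (Ξ.filter fun p => p.1 = a).image Prod.snd with hT
      have hTcard : T.card = (Ξ.filter fun p => p.1 = a).card := by
        rw [hT]
        apply Finset.card_image_of_injOn
        intro p hp p' hp' hpp
        rw [Finset.mem_coe, Finset.mem_filter] at hp hp'
        exact Prod.ext (hp.2.trans hp'.2.symm) hpp
      have hTroots : T.val ⊆ q.roots := by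
        intro b hb
        rw [hT] at hb
        rw [Finset.mem_val, Finset.mem_image] at hb
        obtain ⟨p, hp, rfl⟩ := hb
        rw [Finset.mem_filter] at hp
        rw [Polynomial.mem_roots hq0]
        have hev := mem_vi.mp hgI p hp.1
        rw [MvPolynomial.eval_eq'] at hev
        rw [Polynomial.IsRoot, hqdef, Polynomial.eval_finset_sum, ← hev]
        refine Finset.sum_congr rfl fun e he => ?_
        rw [Polynomial.eval_mul, Polynomial.eval_C, Polynomial.eval_pow, Polynomial.eval_X,
          Fin.prod_univ_two]
        simp [hp.2, mul_assoc]
      have h1 := Polynomial.card_le_degree_of_subset_roots hTroots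
      omega
    rw [hceval, hq, Polynomial.coeff_zero]
  have hBroots : B.val ⊆ c.roots := by
    intro b hb
    rw [Finset.mem_val] at hb
    rw [Polynomial.mem_roots hc0]
    exact hroot b hb
  have hBcard : B.card ≤ d 0 := (Polynomial.card_le_degree_of_subset_roots hBroots).trans hcdeg
  -- but B has at least d 0 + 1 elements
  have hrange : Finset.range (d 0 + 1)
      ⊆ (S.image Prod.fst).filter (fun k => d 1 < (S.filter fun p => p.1 = k).card) := by
    intro k hk
    rw [Finset.mem_range] at hk
    have hklt := lower_lt_card hL hdS (by omega : k ≤ d 0)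
    refine Finset.mem_filter.mpr ⟨?_, hklt⟩
    rw [Finset.mem_image]
    exact ⟨(k, d 1), lower_mem_of_lt_card hL hklt, rfl⟩
  have := Finset.card_le_card hrange
  rw [count_cols hcc (d 1)] at this
  rw [Finset.card_range] at this
  rw [← hB] at this
  omega
end Aux

/-- `{x^i y^j : (i,j) ∈ S_y(Ξ)}` is exactly the Gröbner éscalier of
the vanishing ideal `I(Ξ)` w.r.t. the inverse lexicographic order (`y` compared
first): `(i,j) ∈ S_y(Ξ)` iff `x^i y^j` is divisible by no `≺_inlex`-leading
monomial of a nonzero element of `I(Ξ)`. -/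
theorem Sy_eq_escalier_inlex {F : Type*} [Field F] [DecidableEq F]
    (Ξ : Finset (F × F)) (S : Finset (ℕ × ℕ)) (hS : IsSy Ξ S) (i j : ℕ) :
    (i, j) ∈ S ↔
      ¬ ∃ g ∈ vanishingIdeal F Ξ, g ≠ 0 ∧ ∃ d ∈ g.support,
        (∀ e ∈ g.support, toLex ((e 1 : ℕ), (e 0 : ℕ)) ≤ toLex ((d 1 : ℕ), (d 0 : ℕ))) ∧
        d 0 ≤ i ∧ d 1 ≤ j := by
  obtain ⟨hL, hcc⟩ := hS
  constructor
  · intro hij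
    rintro ⟨g, hgI, hg0, d, hd, hmax, hdi, hdj⟩
    exact forward hL hcc hij hgI hg0 hd hmax hdi hdj
  · intro hng
    by_contra hij
    exact hng (backward hL hcc hij)
end

section
/- If Ξ ⊂ F² is an A-cartesian set, then A = S_x(Ξ) = S_y(Ξ): the lower set witnessing the cartesian structure coincides with both lower sets obtained from horizontal and vertical line coverings. -/
open MvPolynomial Finset

/-! ### Auxiliary lemmas -/

/-- A downward-closed finset of ℕ is an initial segment. -/
lemma lowerNat_eq_range (S : Finset ℕ) (h : ∀ a ∈ S, ∀ b ≤ a, b ∈ S) :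
    S = Finset.range S.card := by
  have hsub : S ⊆ Finset.range S.card := by
    intro a ha
    rw [Finset.mem_range]
    have hss : Finset.range (a + 1) ⊆ S := by
      intro b hb
      exact h a ha b (Nat.lt_succ_iff.mp (Finset.mem_range.mp hb))
    have := Finset.card_le_card hss
    simpa using this
  exact Finset.eq_of_subset_of_card_le hsub (by simp)

/-- The length of row `j` of `A`. -/
def rowLen (A : Finset (ℕ × ℕ)) (j : ℕ) : ℕ := (A.filter fun p => p.2 = j).card

lemma mem_iff_lt_rowLen {A : Finset (ℕ × ℕ)} (hA : IsLowerSet2 A) (i j : ℕ) :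
    (i, j) ∈ A ↔ i < rowLen A j := by
  set R : Finset ℕ := (A.filter fun p => p.2 = j).image Prod.fst with hR
  have hinj : Set.InjOn Prod.fst ((A.filter fun p => p.2 = j : Finset (ℕ × ℕ)) : Set (ℕ × ℕ)) := by
    rintro ⟨a, b⟩ ha ⟨c, d⟩ hc h
    simp only [Finset.coe_filter, Set.mem_setOf_eq] at ha hc
    simp only at h
    simp [h, ha.2, hc.2]
  have hcard : R.card = rowLen A j := Finset.card_image_of_injOn hinj
  have hmemR : ∀ i' : ℕ, i' ∈ R ↔ (i', j) ∈ A := by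
    intro i'
    constructor
    · intro hi'
      rcases Finset.mem_image.mp hi' with ⟨p, hp, hpf⟩
      rcases Finset.mem_filter.mp hp with ⟨hpA, hpj⟩
      have : p = (i', j) := by
        cases p; simp_all
      rwa [this] at hpA
    · intro hi'
      exact Finset.mem_image.mpr ⟨(i', j), Finset.mem_filter.mpr ⟨hi', rfl⟩, rfl⟩
  have hlow : ∀ a ∈ R, ∀ b ≤ a, b ∈ R := by
    intro a ha b hb
    rw [hmemR] at ha ⊢
    exact hA _ ha (b, j) hb le_rfl
  have : R = Finset.range R.card := lowerNat_eq_range R hlow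
  rw [← hmemR, this, Finset.mem_range, hcard]

lemma countP_rowCountsA {A : Finset (ℕ × ℕ)} (hA : IsLowerSet2 A) (i j : ℕ) :
    (i, j) ∈ A ↔ j < Multiset.countP (fun n => i < n) (rowCountsA A) := by
  set T : Finset ℕ := (A.image Prod.snd).filter (fun jj => i < rowLen A jj) with hT
  have hcount : Multiset.countP (fun n => i < n) (rowCountsA A) = T.card := by
    unfold rowCountsA
    rw [Multiset.countP_map]
    rfl
  have hmemT : ∀ j' : ℕ, j' ∈ T ↔ (i, j') ∈ A := by
    intro j'
    constructor
    · intro hj'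
      rcases Finset.mem_filter.mp hj' with ⟨_, h2⟩
      exact (mem_iff_lt_rowLen hA i j').mpr h2
    · intro hj'
      refine Finset.mem_filter.mpr ⟨Finset.mem_image.mpr ⟨(i, j'), hj', rfl⟩, ?_⟩
      exact (mem_iff_lt_rowLen hA i j').mp hj'
  have hlow : ∀ a ∈ T, ∀ b ≤ a, b ∈ T := by
    intro a ha b hb
    rw [hmemT] at ha ⊢
    exact hA _ ha (i, b) le_rfl hb
  have hrange : T = Finset.range T.card := lowerNat_eq_range T hlow
  rw [← hmemT, hcount, hrange, Finset.mem_range, Finset.card_range]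

/-- Two lower sets with equal multisets of row lengths coincide. -/
lemma lower_eq_of_rowCountsA {A B : Finset (ℕ × ℕ)} (hA : IsLowerSet2 A)
    (hB : IsLowerSet2 B) (h : rowCountsA A = rowCountsA B) : A = B := by
  ext ⟨i, j⟩
  rw [countP_rowCountsA hA, countP_rowCountsA hB, h]

/-- Generic swap lemma for the counting multisets. -/
lemma swapCounts {α : Type*} [DecidableEq α] (S : Finset (α × α)) :
    (((S.image Prod.swap).image Prod.snd).val.map
      (fun b => ((S.image Prod.swap).filter fun p => p.2 = b).card))
    = (S.image Prod.fst).val.map fun a => (S.filter fun p => p.1 = a).card := by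
  have h1 : (S.image Prod.swap).image Prod.snd = S.image Prod.fst := by
    rw [Finset.image_image]; rfl
  rw [h1]
  refine Multiset.map_congr rfl ?_
  intro a _
  rw [Finset.filter_image, Finset.card_image_of_injective _ Prod.swap_injective]
  congr 1

lemma rowCounts_swap {F : Type*} [Field F] [DecidableEq F] (Ξ : Finset (F × F)) :
    rowCounts (Ξ.image Prod.swap) = colCounts Ξ := swapCounts Ξ

lemma rowCountsA_swap (A : Finset (ℕ × ℕ)) :
    rowCountsA (A.image Prod.swap) = colCountsA A := swapCounts A

lemma isLowerSet2_swap {A : Finset (ℕ × ℕ)} (hA : IsLowerSet2 A) :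
    IsLowerSet2 (A.image Prod.swap) := by
  intro a ha b hb1 hb2
  rcases Finset.mem_image.mp ha with ⟨p, hp, hpa⟩
  have hpA : (a.2, a.1) ∈ A := by
    cases p; cases a; simp_all [Prod.swap]
  have : (b.2, b.1) ∈ A := hA _ hpA (b.2, b.1) hb2 hb1
  exact Finset.mem_image.mpr ⟨(b.2, b.1), this, rfl⟩

/-- Row counts of the image of a cartesian set equal the row lengths of `A`. -/
lemma rowCounts_cart {F : Type*} [Field F] [DecidableEq F] (A : Finset (ℕ × ℕ)) (x y : ℕ → F)
    (hx : Set.InjOn x {i | ∃ j, (i, j) ∈ A}) (hy : Set.InjOn y {j | ∃ i, (i, j) ∈ A}) :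
    rowCounts (A.image fun ij => (x ij.1, y ij.2)) = rowCountsA A := by
  set f : ℕ × ℕ → F × F := fun ij => (x ij.1, y ij.2) with hf
  have hfinj : Set.InjOn f ↑A := by
    rintro ⟨i, j⟩ hij ⟨i', j'⟩ hij' h
    simp only [Finset.mem_coe] at hij hij'
    have h1 : x i = x i' := congrArg Prod.fst h
    have h2 : y j = y j' := congrArg Prod.snd h
    have e1 : i = i' := hx ⟨j, hij⟩ ⟨j', hij'⟩ h1
    have e2 : j = j' := hy ⟨i, hij⟩ ⟨i', hij'⟩ h2
    simp [e1, e2]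
  have himg : (A.image f).image Prod.snd = (A.image Prod.snd).image y := by
    rw [Finset.image_image, Finset.image_image]; rfl
  have hJ : ∀ j : ℕ, j ∈ A.image Prod.snd ↔ ∃ i, (i, j) ∈ A := by
    intro j
    constructor
    · intro hj
      rcases Finset.mem_image.mp hj with ⟨p, hp, rfl⟩
      exact ⟨p.1, hp⟩
    · rintro ⟨i, hi⟩
      exact Finset.mem_image.mpr ⟨(i, j), hi, rfl⟩
  have hyJ : Set.InjOn y ↑(A.image Prod.snd) := by
    intro j hj j' hj' h
    exact hy ((hJ j).mp hj) ((hJ j').mp hj') h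
  unfold rowCounts rowCountsA
  rw [himg, Finset.image_val_of_injOn hyJ, Multiset.map_map]
  refine Multiset.map_congr rfl ?_
  intro j hj
  have hjJ : ∃ i, (i, j) ∈ A := (hJ j).mp hj
  simp only [Function.comp]
  rw [Finset.filter_image,
    Finset.card_image_of_injOn (hfinj.mono (by exact_mod_cast Finset.filter_subset _ A))]
  congr 1
  refine Finset.filter_congr ?_
  intro p hp
  simp only [hf, decide_eq_decide]
  constructor
  · intro h
    exact hy ⟨p.1, by simpa using hp⟩ hjJ h
  · intro h
    rw [h]

/-- If `Ξ` is `A`-cartesian then `A = S_x(Ξ) = S_y(Ξ)`. -/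
theorem cartesian_lower_set_eq_Sx_eq_Sy {F : Type*} [Field F] [DecidableEq F]
    (Ξ : Finset (F × F)) (A B C : Finset (ℕ × ℕ))
    (hA : IsCartesianWith A Ξ) (hB : IsSx Ξ B) (hC : IsSy Ξ C) :
    A = B ∧ A = C := by
  obtain ⟨hAl, x, y, hx, hy, hΞ⟩ := hA
  obtain ⟨hBl, hBr⟩ := hB
  obtain ⟨hCl, hCr⟩ := hC
  have hrow : rowCounts Ξ = rowCountsA A := by
    rw [hΞ]; exact rowCounts_cart A x y hx hy
  have hcol : colCounts Ξ = colCountsA A := by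
    have h1 : Ξ.image Prod.swap = (A.image Prod.swap).image (fun ij => (y ij.1, x ij.2)) := by
      rw [hΞ, Finset.image_image, Finset.image_image]; rfl
    have hset1 : {i | ∃ j, (i, j) ∈ A.image Prod.swap} = {j | ∃ i, (i, j) ∈ A} := by
      ext j
      simp only [Set.mem_setOf_eq, Finset.mem_image]
      constructor
      · rintro ⟨i, ⟨a, b⟩, hab, h⟩
        refine ⟨i, ?_⟩
        have : (b, a) = (j, i) := h
        obtain ⟨rfl, rfl⟩ := Prod.mk.injEq .. ▸ (by exact ⟨congrArg Prod.fst this, congrArg Prod.snd this⟩ : b = j ∧ a = i)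
        exact hab
      · rintro ⟨i, hij⟩
        exact ⟨i, (i, j), hij, rfl⟩
    have hset2 : {j | ∃ i, (i, j) ∈ A.image Prod.swap} = {i | ∃ j, (i, j) ∈ A} := by
      ext i
      simp only [Set.mem_setOf_eq, Finset.mem_image]
      constructor
      · rintro ⟨j, ⟨a, b⟩, hab, h⟩
        refine ⟨j, ?_⟩
        have hb : b = j := congrArg Prod.fst h
        have ha : a = i := congrArg Prod.snd h
        rwa [hb, ha] at hab
      · rintro ⟨j, hij⟩
        exact ⟨j, (i, j), hij, rfl⟩
    have hx' : Set.InjOn y {i | ∃ j, (i, j) ∈ A.image Prod.swap} := by rw [hset1]; exact hy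
    have hy' : Set.InjOn x {j | ∃ i, (i, j) ∈ A.image Prod.swap} := by rw [hset2]; exact hx
    calc colCounts Ξ = rowCounts (Ξ.image Prod.swap) := (rowCounts_swap Ξ).symm
      _ = rowCountsA (A.image Prod.swap) := by
          rw [h1]; exact rowCounts_cart (A.image Prod.swap) y x hx' hy'
      _ = colCountsA A := rowCountsA_swap A
  constructor
  · exact lower_eq_of_rowCountsA hAl hBl (hrow ▸ hBr.symm ▸ rfl)
  · have hcc : colCountsA A = colCountsA C := hcol ▸ hCr.symm ▸ rfl
    have : A.image Prod.swap = C.image Prod.swap := by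
      refine lower_eq_of_rowCountsA (isLowerSet2_swap hAl) (isLowerSet2_swap hCl) ?_
      rw [rowCountsA_swap, rowCountsA_swap, hcc]
    exact Finset.image_injective Prod.swap_injective this
end

section
/- A maximal cartesian subset of a finite point set need not be unique: there exists a finite set Ξ ⊂ ℚ² admitting at least three distinct maximal cartesian subsets. Concretely, for Ξ = {(0,0),(0,2),(0,3),(1,1),(5/2,0),(5/2,1),(5/2,2),(4,0),(4,2)}, the sets Ξ₁' = {(0,0),(0,2),(5/2,0),(5/2,1),(5/2,2),(4,0),(4,2)}, Ξ₂' = {(0,0),(0,2),(0,3),(5/2,0),(5/2,2),(4,0),(4,2)}, and Ξ₃' = {(1,1),(5/2,0),(5/2,1),(5/2,2)} are all maximal cartesian subsets of Ξ. -/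
open MvPolynomial Finset

/-- `Ξ'` is a maximal cartesian subset of `Ξ`. -/
def IsMaximalCartesianSubset {F : Type*} [Field F] [DecidableEq F]
    (Ξ Ξ' : Finset (F × F)) : Prop :=
  Ξ' ⊆ Ξ ∧ IsCartesian Ξ' ∧
    ∀ Ξ'' ⊆ Ξ, IsCartesian Ξ'' → Ξ' ⊆ Ξ'' → Ξ'' = Ξ'

private lemma cart_cross {F : Type*} [Field F] [DecidableEq F] {Ξ : Finset (F × F)}
    (h : IsCartesian Ξ) {a b c d : F} (h1 : (a, c) ∈ Ξ) (h2 : (b, d) ∈ Ξ) :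
    (a, d) ∈ Ξ ∨ (b, c) ∈ Ξ := by
  obtain ⟨A, hlow, x, y, -, -, rfl⟩ := h
  simp only [Finset.mem_image] at h1 h2 ⊢
  obtain ⟨⟨i, j⟩, hij, hx⟩ := h1
  obtain ⟨⟨i', j'⟩, hij', hx'⟩ := h2
  simp only [Prod.mk.injEq] at hx hx'
  rcases le_total j j' with hle | hle
  · right
    exact ⟨(i', j), hlow _ hij' (i', j) le_rfl hle, by simp [hx.1, hx'.2, hx'.1, hx.2]⟩
  · left
    exact ⟨(i, j'), hlow _ hij (i, j') le_rfl hle, by simp [hx.1, hx'.2]⟩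

private def A7 : Finset (ℕ × ℕ) := {(0,0),(0,1),(0,2),(1,0),(1,1),(2,0),(2,1)}
private def A4 : Finset (ℕ × ℕ) := {(0,0),(0,1),(0,2),(1,0)}

private lemma lowA7 : IsLowerSet2 A7 := by
  rintro ⟨a1, a2⟩ ha ⟨b1, b2⟩ h1 h2
  simp only [A7, Finset.mem_insert, Finset.mem_singleton, Prod.mk.injEq] at ha ⊢
  dsimp only at h1 h2
  omega

private lemma lowA4 : IsLowerSet2 A4 := by
  rintro ⟨a1, a2⟩ ha ⟨b1, b2⟩ h1 h2
  simp only [A4, Finset.mem_insert, Finset.mem_singleton, Prod.mk.injEq] at ha ⊢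
  dsimp only at h1 h2
  omega

private def xq (u v w : ℚ) : ℕ → ℚ := fun n => if n = 0 then u else if n = 1 then v else w

private lemma injOn_xq {u v w : ℚ} (huv : u ≠ v) (huw : u ≠ w) (hvw : v ≠ w)
    (s : Set ℕ) (hs : ∀ n ∈ s, n ≤ 2) : Set.InjOn (xq u v w) s := by
  intro m hm n hn h
  have hm2 := hs m hm
  have hn2 := hs n hn
  interval_cases m <;> interval_cases n <;> simp [xq] at h <;>
    first | rfl | exact absurd h (by assumption) | exact absurd h.symm (by assumption)

private lemma excl {Ξ Ξ'' : Finset (ℚ × ℚ)} (hsub : Ξ'' ⊆ Ξ) (hcart : IsCartesian Ξ'')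
    {a c b d : ℚ} (hq : (b, d) ∈ Ξ'') (h1 : (a, d) ∉ Ξ) (h2 : (b, c) ∉ Ξ) :
    (a, c) ∉ Ξ'' :=
  fun hm => (cart_cross hcart hm hq).elim (fun h => h1 (hsub h)) (fun h => h2 (hsub h))

private def S : Finset (ℚ × ℚ) :=
  {(0, 0), (0, 2), (0, 3), (1, 1), (5/2, 0), (5/2, 1), (5/2, 2), (4, 0), (4, 2)}
private def S1 : Finset (ℚ × ℚ) :=
  {(0, 0), (0, 2), (5/2, 0), (5/2, 1), (5/2, 2), (4, 0), (4, 2)}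
private def S2 : Finset (ℚ × ℚ) :=
  {(0, 0), (0, 2), (0, 3), (5/2, 0), (5/2, 2), (4, 0), (4, 2)}
private def S3 : Finset (ℚ × ℚ) := {(1, 1), (5/2, 0), (5/2, 1), (5/2, 2)}

private lemma img1 : S1 = A7.image fun ij => (xq (5/2) 0 4 ij.1, xq 0 2 1 ij.2) := by
  ext p
  simp only [S1, A7, Finset.image_insert, Finset.image_singleton, xq, reduceIte,
    Finset.mem_insert, Finset.mem_singleton]
  constructor <;> intro h <;>
    rcases h with rfl | rfl | rfl | rfl | rfl | rfl | rfl <;> norm_num [Prod.ext_iff]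

private lemma img2 : S2 = A7.image fun ij => (xq 0 (5/2) 4 ij.1, xq 0 2 3 ij.2) := by
  ext p
  simp only [S2, A7, Finset.image_insert, Finset.image_singleton, xq, reduceIte,
    Finset.mem_insert, Finset.mem_singleton]
  constructor <;> intro h <;>
    rcases h with rfl | rfl | rfl | rfl | rfl | rfl | rfl <;> norm_num [Prod.ext_iff]

private lemma img3 : S3 = A4.image fun ij => (xq (5/2) 1 0 ij.1, xq 1 0 2 ij.2) := by
  ext p
  simp only [S3, A4, Finset.image_insert, Finset.image_singleton, xq, reduceIte,
    Finset.mem_insert, Finset.mem_singleton]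
  constructor <;> intro h <;>
    rcases h with rfl | rfl | rfl | rfl <;> norm_num [Prod.ext_iff]

private lemma bnd7x : ∀ n ∈ {i | ∃ j, (i, j) ∈ A7}, n ≤ 2 := by
  rintro n ⟨j, hj⟩; simp only [A7, Finset.mem_insert, Finset.mem_singleton, Prod.mk.injEq] at hj
  omega

private lemma bnd7y : ∀ n ∈ {j | ∃ i, (i, j) ∈ A7}, n ≤ 2 := by
  rintro n ⟨i, hi⟩; simp only [A7, Finset.mem_insert, Finset.mem_singleton, Prod.mk.injEq] at hi
  omega

private lemma bnd4x : ∀ n ∈ {i | ∃ j, (i, j) ∈ A4}, n ≤ 2 := by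
  rintro n ⟨j, hj⟩; simp only [A4, Finset.mem_insert, Finset.mem_singleton, Prod.mk.injEq] at hj
  omega

private lemma bnd4y : ∀ n ∈ {j | ∃ i, (i, j) ∈ A4}, n ≤ 2 := by
  rintro n ⟨i, hi⟩; simp only [A4, Finset.mem_insert, Finset.mem_singleton, Prod.mk.injEq] at hi
  omega

private lemma cart1 : IsCartesian S1 :=
  ⟨A7, lowA7, xq (5/2) 0 4, xq 0 2 1,
    injOn_xq (by norm_num) (by norm_num) (by norm_num) _ bnd7x,
    injOn_xq (by norm_num) (by norm_num) (by norm_num) _ bnd7y, img1⟩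

private lemma cart2 : IsCartesian S2 :=
  ⟨A7, lowA7, xq 0 (5/2) 4, xq 0 2 3,
    injOn_xq (by norm_num) (by norm_num) (by norm_num) _ bnd7x,
    injOn_xq (by norm_num) (by norm_num) (by norm_num) _ bnd7y, img2⟩

private lemma cart3 : IsCartesian S3 :=
  ⟨A4, lowA4, xq (5/2) 1 0, xq 1 0 2,
    injOn_xq (by norm_num) (by norm_num) (by norm_num) _ bnd4x,
    injOn_xq (by norm_num) (by norm_num) (by norm_num) _ bnd4y, img3⟩

private lemma sub1 : S1 ⊆ S := by
  intro p hp
  simp only [S1, Finset.mem_insert, Finset.mem_singleton] at hp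
  simp only [S, Finset.mem_insert, Finset.mem_singleton]
  rcases hp with rfl | rfl | rfl | rfl | rfl | rfl | rfl <;> norm_num [Prod.ext_iff]

private lemma sub2 : S2 ⊆ S := by
  intro p hp
  simp only [S2, Finset.mem_insert, Finset.mem_singleton] at hp
  simp only [S, Finset.mem_insert, Finset.mem_singleton]
  rcases hp with rfl | rfl | rfl | rfl | rfl | rfl | rfl <;> norm_num [Prod.ext_iff]

private lemma sub3 : S3 ⊆ S := by
  intro p hp
  simp only [S3, Finset.mem_insert, Finset.mem_singleton] at hp
  simp only [S, Finset.mem_insert, Finset.mem_singleton]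
  rcases hp with rfl | rfl | rfl | rfl <;> norm_num [Prod.ext_iff]

set_option maxHeartbeats 1000000 in
private lemma max1 : IsMaximalCartesianSubset S S1 := by
  refine ⟨sub1, cart1, ?_⟩
  intro Ξ'' hsub hcart hle
  have e1 : ((0 : ℚ), (3 : ℚ)) ∉ Ξ'' :=
    excl hsub hcart (hle (show ((5 : ℚ)/2, (1 : ℚ)) ∈ S1 by simp [S1]))
      (by norm_num [S, Prod.ext_iff]) (by norm_num [S, Prod.ext_iff])
  have e2 : ((1 : ℚ), (1 : ℚ)) ∉ Ξ'' :=
    excl hsub hcart (hle (show ((4 : ℚ), (0 : ℚ)) ∈ S1 by simp [S1]))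
      (by norm_num [S, Prod.ext_iff]) (by norm_num [S, Prod.ext_iff])
  refine Finset.Subset.antisymm (fun p hp => ?_) hle
  have hpS := hsub hp
  simp only [S, Finset.mem_insert, Finset.mem_singleton] at hpS
  simp only [S1, Finset.mem_insert, Finset.mem_singleton]
  rcases hpS with rfl | rfl | rfl | rfl | rfl | rfl | rfl | rfl | rfl
  · norm_num [Prod.ext_iff]
  · norm_num [Prod.ext_iff]
  · exact absurd hp e1
  · exact absurd hp e2
  · norm_num [Prod.ext_iff]
  · norm_num [Prod.ext_iff]
  · norm_num [Prod.ext_iff]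
  · norm_num [Prod.ext_iff]
  · norm_num [Prod.ext_iff]

set_option maxHeartbeats 1000000 in
private lemma max2 : IsMaximalCartesianSubset S S2 := by
  refine ⟨sub2, cart2, ?_⟩
  intro Ξ'' hsub hcart hle
  have e1 : ((5 : ℚ)/2, (1 : ℚ)) ∉ Ξ'' :=
    excl hsub hcart (hle (show ((0 : ℚ), (3 : ℚ)) ∈ S2 by simp [S2]))
      (by norm_num [S, Prod.ext_iff]) (by norm_num [S, Prod.ext_iff])
  have e2 : ((1 : ℚ), (1 : ℚ)) ∉ Ξ'' :=
    excl hsub hcart (hle (show ((4 : ℚ), (0 : ℚ)) ∈ S2 by simp [S2]))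
      (by norm_num [S, Prod.ext_iff]) (by norm_num [S, Prod.ext_iff])
  refine Finset.Subset.antisymm (fun p hp => ?_) hle
  have hpS := hsub hp
  simp only [S, Finset.mem_insert, Finset.mem_singleton] at hpS
  simp only [S2, Finset.mem_insert, Finset.mem_singleton]
  rcases hpS with rfl | rfl | rfl | rfl | rfl | rfl | rfl | rfl | rfl
  · norm_num [Prod.ext_iff]
  · norm_num [Prod.ext_iff]
  · norm_num [Prod.ext_iff]
  · exact absurd hp e2
  · norm_num [Prod.ext_iff]
  · exact absurd hp e1
  · norm_num [Prod.ext_iff]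
  · norm_num [Prod.ext_iff]
  · norm_num [Prod.ext_iff]

set_option maxHeartbeats 1000000 in
private lemma max3 : IsMaximalCartesianSubset S S3 := by
  refine ⟨sub3, cart3, ?_⟩
  intro Ξ'' hsub hcart hle
  have hq : ((1 : ℚ), (1 : ℚ)) ∈ Ξ'' := hle (show ((1 : ℚ), (1 : ℚ)) ∈ S3 by simp [S3])
  have e1 : ((0 : ℚ), (0 : ℚ)) ∉ Ξ'' :=
    excl hsub hcart hq (by norm_num [S, Prod.ext_iff]) (by norm_num [S, Prod.ext_iff])
  have e2 : ((0 : ℚ), (2 : ℚ)) ∉ Ξ'' :=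
    excl hsub hcart hq (by norm_num [S, Prod.ext_iff]) (by norm_num [S, Prod.ext_iff])
  have e3 : ((0 : ℚ), (3 : ℚ)) ∉ Ξ'' :=
    excl hsub hcart hq (by norm_num [S, Prod.ext_iff]) (by norm_num [S, Prod.ext_iff])
  have e4 : ((4 : ℚ), (0 : ℚ)) ∉ Ξ'' :=
    excl hsub hcart hq (by norm_num [S, Prod.ext_iff]) (by norm_num [S, Prod.ext_iff])
  have e5 : ((4 : ℚ), (2 : ℚ)) ∉ Ξ'' :=
    excl hsub hcart hq (by norm_num [S, Prod.ext_iff]) (by norm_num [S, Prod.ext_iff])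
  refine Finset.Subset.antisymm (fun p hp => ?_) hle
  have hpS := hsub hp
  simp only [S, Finset.mem_insert, Finset.mem_singleton] at hpS
  simp only [S3, Finset.mem_insert, Finset.mem_singleton]
  rcases hpS with rfl | rfl | rfl | rfl | rfl | rfl | rfl | rfl | rfl
  · exact absurd hp e1
  · exact absurd hp e2
  · exact absurd hp e3
  · norm_num [Prod.ext_iff]
  · norm_num [Prod.ext_iff]
  · norm_num [Prod.ext_iff]
  · norm_num [Prod.ext_iff]
  · exact absurd hp e4
  · exact absurd hp e5

private theorem main' :
    IsMaximalCartesianSubset S S1 ∧ IsMaximalCartesianSubset S S2 ∧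
      IsMaximalCartesianSubset S S3 ∧ S1 ≠ S2 ∧ S1 ≠ S3 ∧ S2 ≠ S3 :=
  ⟨max1, max2, max3,
    fun h => by
      have h2 : ((0 : ℚ), (3 : ℚ)) ∈ S1 := h ▸ (by simp [S2])
      norm_num [S1, Prod.ext_iff] at h2,
    fun h => by
      have h2 : ((1 : ℚ), (1 : ℚ)) ∈ S1 := h ▸ (by simp [S3])
      norm_num [S1, Prod.ext_iff] at h2,
    fun h => by
      have h2 : ((1 : ℚ), (1 : ℚ)) ∈ S2 := h ▸ (by simp [S3])
      norm_num [S2, Prod.ext_iff] at h2⟩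

/-- Maximal cartesian subsets need not be unique: the displayed
set `Ξ ⊂ ℚ²` has (at least) three distinct maximal cartesian subsets. -/
theorem maximal_cartesian_subset_not_unique :
    let Ξ : Finset (ℚ × ℚ) :=
      {(0, 0), (0, 2), (0, 3), (1, 1), (5/2, 0), (5/2, 1), (5/2, 2), (4, 0), (4, 2)}
    let Ξ₁ : Finset (ℚ × ℚ) :=
      {(0, 0), (0, 2), (5/2, 0), (5/2, 1), (5/2, 2), (4, 0), (4, 2)}
    let Ξ₂ : Finset (ℚ × ℚ) :=
      {(0, 0), (0, 2), (0, 3), (5/2, 0), (5/2, 2), (4, 0), (4, 2)}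
    let Ξ₃ : Finset (ℚ × ℚ) := {(1, 1), (5/2, 0), (5/2, 1), (5/2, 2)}
    IsMaximalCartesianSubset Ξ Ξ₁ ∧ IsMaximalCartesianSubset Ξ Ξ₂ ∧
      IsMaximalCartesianSubset Ξ Ξ₃ ∧ Ξ₁ ≠ Ξ₂ ∧ Ξ₁ ≠ Ξ₃ ∧ Ξ₂ ≠ Ξ₃ := by
  exact main'
end
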